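/- arXiv:1001.4966 — 5 statements merged into one kernel-verified Lean document; each statement's English description precedes it below -/
import Mathlib

section
/- Let p > 1, 0 < f ≤ 1, λ > (1/f)^{1/(p−1)}, and set A = f^{p/(p−1)} − 1/λ^p. Define φ : [0,1] → [0,∞) by φ(t) = (1 − 1/p)(t + 1/λ^p)^{−1/p} for 0 ≤ t < A, φ(t) = 0 for A ≤ t ≤ 1 − 1/λ^p, and φ(t) = λ for 1 − 1/λ^p < t ≤ 1 (note A ≤ 1 − 1/λ^p). Then, with respect to Lebesgue measure on [0,1], ∫_0^1 φ(s) ds = f and |||φ|||_{p,∞} = 1. -/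
open MeasureTheory Set Filter ENNReal

/-- A measure is non-atomic if every measurable set of positive measure contains a
measurable subset of strictly smaller positive measure. -/
def Nonatomic {X : Type*} [MeasurableSpace X] (μ : Measure X) : Prop :=
  ∀ A : Set X, MeasurableSet A → 0 < μ A →
    ∃ B, B ⊆ A ∧ MeasurableSet B ∧ 0 < μ B ∧ μ B < μ A

/-- A tree on a probability measure space, in the sense of Melas. -/
structure TreeOn (X : Type*) [MeasurableSpace X] (μ : MeasureTheory.Measure X) where
  carrier : Set (Set X)
  child : Set X → Set (Set X)
  level : ℕ → Set (Set X)
  univ_mem : Set.univ ∈ carrier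
  meas : ∀ I ∈ carrier, MeasurableSet I
  pos : ∀ I ∈ carrier, 0 < μ I
  child_subset_carrier : ∀ I ∈ carrier, child I ⊆ carrier
  child_finite : ∀ I ∈ carrier, (child I).Finite
  child_two : ∀ I ∈ carrier, ∃ J ∈ child I, ∃ K ∈ child I, J ≠ K
  child_sub : ∀ I ∈ carrier, ∀ J ∈ child I, J ⊆ I
  child_almost_disjoint : ∀ I ∈ carrier, ∀ J ∈ child I, ∀ K ∈ child I, J ≠ K → μ (J ∩ K) = 0
  child_union : ∀ I ∈ carrier, ⋃₀ child I = I
  level_zero : level 0 = {Set.univ}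
  level_succ : ∀ m, level (m + 1) = ⋃ I ∈ level m, child I
  carrier_eq : carrier = ⋃ m, level m
  level_tendsto : Filter.Tendsto (fun m => ⨆ I ∈ level m, μ I) Filter.atTop (nhds 0)

/-- The maximal operator associated to a tree `T`:
`M_T φ (x) = sup { (1/μ I) ∫_I |φ| dμ : x ∈ I, I ∈ T }`. -/
noncomputable def maxT {X : Type*} [MeasurableSpace X] (μ : MeasureTheory.Measure X)
    (T : TreeOn X μ) (φ : X → ℝ) (x : X) : ℝ≥0∞ :=
  ⨆ (I : Set X) (_ : I ∈ T.carrier) (_ : x ∈ I),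
    (∫⁻ y in I, ENNReal.ofReal |φ y| ∂μ) / μ I

/-- The norm `|||φ|||_{p,∞} = sup { μ(E)^{-1+1/p} ∫_E |φ| dμ : E measurable, μ E > 0 }`. -/
noncomputable def tripleNorm {X : Type*} [MeasurableSpace X] (μ : MeasureTheory.Measure X)
    (p : ℝ) (φ : X → ℝ) : ℝ≥0∞ :=
  ⨆ (E : Set X) (_ : MeasurableSet E) (_ : 0 < μ E),
    μ E ^ (-1 + 1/p) * ∫⁻ x in E, ENNReal.ofReal |φ x| ∂μ

/-- The standard quasi-norm `‖φ‖_{p,∞} = sup { λ · μ({|φ| > λ})^{1/p} : λ > 0 }`. -/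
noncomputable def weakNorm {X : Type*} [MeasurableSpace X] (μ : MeasureTheory.Measure X)
    (p : ℝ) (φ : X → ℝ) : ℝ≥0∞ :=
  ⨆ (l : ℝ) (_ : 0 < l), ENNReal.ofReal l * μ {x | l < |φ x|} ^ (1/p)

/-- The standard quasi-norm for an `ℝ≥0∞`-valued function (such as `maxT μ T φ`). -/
noncomputable def weakNormE {X : Type*} [MeasurableSpace X] (μ : MeasureTheory.Measure X)
    (p : ℝ) (g : X → ℝ≥0∞) : ℝ≥0∞ :=
  ⨆ (l : ℝ) (_ : 0 < l), ENNReal.ofReal l * μ {x | ENNReal.ofReal l < g x} ^ (1/p)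

lemma aux_lint_rpow (C b d r : ℝ) (hC : 0 ≤ C) (hb : 0 < b) (hbd : b ≤ d) (hr : r ≠ -1) :
    ∫⁻ t in Set.Ioc b d, ENNReal.ofReal (C * t ^ r) =
      ENNReal.ofReal (C * ((d ^ (r+1) - b ^ (r+1)) / (r+1))) := by
  have hcont : ContinuousOn (fun t : ℝ => C * t ^ r) (Set.Icc b d) := by
    apply continuousOn_const.mul
    apply ContinuousOn.rpow_const continuousOn_id
    intro x hx; left; simp only [id_eq]; intro h; nlinarith [hx.1]
  have hint : IntegrableOn (fun t : ℝ => C * t ^ r) (Set.Ioc b d) :=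
    (hcont.integrableOn_Icc).mono_set Set.Ioc_subset_Icc_self
  rw [← ofReal_integral_eq_lintegral_ofReal hint ?_]
  · congr 1
    rw [← intervalIntegral.integral_of_le hbd, intervalIntegral.integral_const_mul,
      integral_rpow (Or.inr ⟨hr, by rw [Set.uIcc_of_le hbd]; simp; intro h; linarith⟩)]
  · filter_upwards [self_mem_ae_restrict measurableSet_Ioc] with x hx
    exact mul_nonneg hC (Real.rpow_nonneg (by linarith [hx.1]) r)

lemma aux_lint_shift (C c A r : ℝ) (hC : 0 ≤ C) (hc : 0 < c) (hA : 0 ≤ A) (hr : -1 < r) :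
    ∫⁻ t in Set.Ioc (0:ℝ) A, ENNReal.ofReal (C * (t + c) ^ r) =
      ENNReal.ofReal (C * (((A + c) ^ (r+1) - c ^ (r+1)) / (r+1))) := by
  have hcont : ContinuousOn (fun t : ℝ => C * (t + c) ^ r) (Set.Icc 0 A) := by
    apply continuousOn_const.mul
    apply ContinuousOn.rpow_const ((continuous_id.add continuous_const).continuousOn)
    intro x hx; left; show x + c ≠ 0; intro h; nlinarith [hx.1]
  have hint : IntegrableOn (fun t : ℝ => C * (t + c) ^ r) (Set.Ioc 0 A) :=
    (hcont.integrableOn_Icc).mono_set Set.Ioc_subset_Icc_self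
  rw [← ofReal_integral_eq_lintegral_ofReal hint ?_]
  · congr 1
    rw [← intervalIntegral.integral_of_le hA, intervalIntegral.integral_const_mul]
    have := intervalIntegral.integral_comp_add_right (a := (0:ℝ)) (b := A) (fun u : ℝ => u ^ r) c
    rw [this, zero_add, integral_rpow (Or.inl hr)]
  · filter_upwards [self_mem_ae_restrict measurableSet_Ioc] with x hx
    exact mul_nonneg hC (Real.rpow_nonneg (by linarith [hx.1]) r)

set_option maxHeartbeats 1000000 in
/-- The explicit extremal function in Theorem 3.1 on `[0,1]` has integral `f`
and `|||φ|||_{p,∞} = 1` (with respect to Lebesgue measure on `[0,1]`). -/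
theorem stmt10 (p f l A : ℝ) (hp : 1 < p) (hf : 0 < f) (hf1 : f ≤ 1)
    (hl : (1 / f) ^ (1 / (p - 1)) < l)
    (hA : A = f ^ (p / (p - 1)) - 1 / l ^ p)
    (φ : ℝ → ℝ)
    (hφ : ∀ t, φ t = if t < A then (1 - 1 / p) * (t + 1 / l ^ p) ^ (-(1 / p))
      else if t ≤ 1 - 1 / l ^ p then 0 else l) :
    (∫⁻ t in Set.Icc (0 : ℝ) 1, ENNReal.ofReal (φ t) = ENNReal.ofReal f) ∧
      tripleNorm (MeasureTheory.volume.restrict (Set.Icc (0 : ℝ) 1)) p φ = 1 := by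
  have hp0 : (0:ℝ) < p := by linarith
  have hp1 : (0:ℝ) < p - 1 := by linarith
  have h1p : (0:ℝ) < 1 - 1/p := by rw [sub_pos, div_lt_one hp0]; exact hp
  have hl1 : (1:ℝ) < l := by
    have h1f : (1:ℝ) ≤ 1/f := one_le_one_div hf hf1
    have := Real.one_le_rpow h1f (by positivity : (0:ℝ) ≤ 1/(p-1))
    linarith
  have hl0 : (0:ℝ) < l := by linarith
  have ha : 1 / l ^ p = l ^ (-p) := by rw [Real.rpow_neg hl0.le, one_div]
  set a : ℝ := l ^ (-p) with ha_def
  rw [ha] at hA hφ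
  have ha0 : 0 < a := Real.rpow_pos_of_pos hl0 _
  have ha1 : a < 1 := Real.rpow_lt_one_of_one_lt_of_neg hl1 (by linarith)
  have hanti : ∀ (r x y : ℝ), r ≤ 0 → 0 < x → x ≤ y → y ^ r ≤ x ^ r := fun r x y hr hx hxy =>
    Real.antitoneOn_rpow_Ioi_of_exponent_nonpos hr (Set.mem_Ioi.mpr hx)
      (Set.mem_Ioi.mpr (lt_of_lt_of_le hx hxy)) hxy
  have hal : a ^ (-(1/p)) = l := by
    rw [ha_def, ← Real.rpow_mul hl0.le,
      show (-p) * (-(1/p)) = 1 by field_simp, Real.rpow_one]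
  have hfe : (0:ℝ) < f ^ (1/(p-1)) := Real.rpow_pos_of_pos hf _
  have hbase : 1/l < f ^ (1/(p-1)) := by
    rw [one_div, Real.inv_rpow hf.le] at hl
    have h2 : (1:ℝ) < f ^ (1/(p-1)) * l := by
      nlinarith [mul_inv_cancel₀ (ne_of_gt hfe)]
    rw [div_lt_iff₀ hl0]; linarith
  have hfa : a < f ^ (p/(p-1)) := by
    have e1 : f ^ (p/(p-1)) = (f ^ (1/(p-1))) ^ p := by
      rw [← Real.rpow_mul hf.le]; congr 1; field_simp
    have e2 : a = (1/l) ^ p := by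
      rw [ha_def, Real.rpow_neg hl0.le, one_div, Real.inv_rpow hl0.le]
    rw [e1, e2]
    exact Real.rpow_lt_rpow (by positivity) hbase hp0
  have hlf : l ^ (1-p) < f := by
    have e2 : l ^ (1-p) = (1/l) ^ (p-1) := by
      rw [one_div, Real.inv_rpow hl0.le, ← Real.rpow_neg hl0.le]; ring_nf
    have := Real.rpow_lt_rpow (by positivity) hbase hp1
    rw [← Real.rpow_mul hf.le] at this
    have h3 : 1/(p-1) * (p-1) = 1 := by field_simp
    rw [h3, Real.rpow_one] at this
    rw [e2]; exact this
  have hA0 : 0 < A := by rw [hA]; linarith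
  have hfp1 : f ^ (p/(p-1)) ≤ 1 := Real.rpow_le_one hf.le hf1 (by positivity)
  have hA1 : A ≤ 1 - a := by rw [hA]; linarith
  have hAle1 : A ≤ 1 := by linarith
  have hφ0 : ∀ x : ℝ, 0 ≤ x → 0 ≤ φ x := by
    intro x hx; rw [hφ x]
    split_ifs with h1 h2
    · exact mul_nonneg h1p.le (Real.rpow_nonneg (by linarith) _)
    · exact le_refl 0
    · exact hl0.le
  have hφm : Measurable φ := by
    have hfeq : φ = fun t => if t < A then (1 - 1/p) * (t + a) ^ (-(1/p))
        else if t ≤ 1 - a then 0 else l := funext hφ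
    rw [hfeq]
    exact Measurable.ite measurableSet_Iio
      (((measurable_id.add_const a).pow measurable_const).const_mul _)
      (Measurable.ite measurableSet_Iic measurable_const measurable_const)
  constructor
  · -- Part 1 : the integral equals f
    have hdisj1 : Disjoint (Set.Ico (0:ℝ) A) (Set.Icc A 1) := by
      rw [Set.disjoint_left]; rintro x ⟨_, h1⟩ ⟨h2, _⟩; linarith
    have hdisj2 : Disjoint (Set.Icc A (1-a)) (Set.Ioc (1-a) 1) := by
      rw [Set.disjoint_left]; rintro x ⟨_, h1⟩ ⟨h2, _⟩; linarith
    rw [← Set.Ico_union_Icc_eq_Icc hA0.le hAle1,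
      lintegral_union measurableSet_Icc hdisj1,
      ← Set.Icc_union_Ioc_eq_Icc hA1 (by linarith : 1 - a ≤ 1),
      lintegral_union measurableSet_Ioc hdisj2]
    have hP1 : ∫⁻ t in Set.Ico (0:ℝ) A, ENNReal.ofReal (φ t)
        = ENNReal.ofReal (f - l ^ (1-p)) := by
      rw [setLIntegral_congr_fun measurableSet_Ico (
        (fun x (hx : x ∈ Set.Ico (0:ℝ) A) => by
          rw [hφ x, if_pos hx.2] :
          ∀ x ∈ Set.Ico (0:ℝ) A, ENNReal.ofReal (φ x)
            = ENNReal.ofReal ((1 - 1/p) * (x + a) ^ (-(1/p))))),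
        setLIntegral_congr Ico_ae_eq_Ioc,
        aux_lint_shift (1-1/p) a A (-(1/p)) h1p.le ha0 hA0.le (by linarith [one_div_pos.mpr hp0])]
      congr 1
      have hr1 : -(1/p) + 1 = 1 - 1/p := by ring
      have hAa : A + a = f ^ (p/(p-1)) := by rw [hA]; ring
      have hmul : (p/(p-1)) * (1 - 1/p) = 1 := by field_simp
      have h1 : (A+a) ^ (1 - 1/p) = f := by
        rw [hAa, ← Real.rpow_mul hf.le, hmul, Real.rpow_one]
      have hmul2 : (-p) * (1 - 1/p) = 1 - p := by field_simp; ring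
      have h2 : a ^ (1 - 1/p) = l ^ (1-p) := by
        rw [ha_def, ← Real.rpow_mul hl0.le, hmul2]
      rw [hr1, h1, h2, mul_comm, div_mul_cancel₀ _ (ne_of_gt h1p)]
    have hP2 : ∫⁻ t in Set.Icc A (1-a), ENNReal.ofReal (φ t) = 0 := by
      rw [setLIntegral_congr_fun measurableSet_Icc (
        (fun x (hx : x ∈ Set.Icc A (1-a)) => by
          rw [hφ x, if_neg (not_lt.mpr hx.1), if_pos hx.2] :
          ∀ x ∈ Set.Icc A (1-a), ENNReal.ofReal (φ x) = ENNReal.ofReal 0))]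
      simp
    have hP3 : ∫⁻ t in Set.Ioc (1-a) 1, ENNReal.ofReal (φ t)
        = ENNReal.ofReal (l ^ (1-p)) := by
      rw [setLIntegral_congr_fun measurableSet_Ioc (
        (fun x (hx : x ∈ Set.Ioc (1-a) 1) => by
          rw [hφ x, if_neg (not_lt.mpr (by linarith [hx.1] : A ≤ x)),
            if_neg (not_le.mpr hx.1)] :
          ∀ x ∈ Set.Ioc (1-a) 1, ENNReal.ofReal (φ x) = ENNReal.ofReal l)),
        setLIntegral_const, Real.volume_Ioc,
        ← ENNReal.ofReal_mul hl0.le]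
      congr 1
      have e3 : (1 : ℝ) - (1 - a) = a := by ring
      rw [e3, ha_def, show (1:ℝ) - p = 1 + (-p) by ring, Real.rpow_add hl0, Real.rpow_one]
    rw [hP1, hP2, hP3, zero_add, ← ENNReal.ofReal_add (by linarith) (Real.rpow_nonneg hl0.le _)]
    ring_nf
  · -- Part 2 : the triple norm equals 1
    set μ : Measure ℝ := volume.restrict (Set.Icc (0:ℝ) 1) with hμ
    have hK0 : (0:ℝ) < (1-1/p) ^ p := Real.rpow_pos_of_pos h1p p
    set K : ℝ := (1-1/p) ^ p with hK_def
    -- the upper bound, for an arbitrary measurable set E of positive measure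
    have hub : ∀ E : Set ℝ, MeasurableSet E → 0 < μ E →
        μ E ^ (-1 + 1/p) * ∫⁻ x in E, ENNReal.ofReal |φ x| ∂μ ≤ 1 := by
      intro E hE hEpos
      have hEfin : μ E ≠ ⊤ := by
        rw [hμ, Measure.restrict_apply hE]
        exact (lt_of_le_of_lt (measure_mono Set.inter_subset_right)
          (by rw [Real.volume_Icc]; exact ENNReal.ofReal_lt_top)).ne
      set m : ℝ := (μ E).toReal with hm_def
      have hμE : μ E = ENNReal.ofReal m := (ENNReal.ofReal_toReal hEfin).symm
      have hm0 : 0 < m := ENNReal.toReal_pos hEpos.ne' hEfin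
      have hEI : MeasurableSet (E ∩ Set.Icc (0:ℝ) 1) := hE.inter measurableSet_Icc
      have hvol : volume (E ∩ Set.Icc (0:ℝ) 1) = ENNReal.ofReal m := by
        rw [← Measure.restrict_apply hE]; exact hμE
      have hres : μ.restrict E = volume.restrict (E ∩ Set.Icc (0:ℝ) 1) := by
        rw [hμ, Measure.restrict_restrict hE]
      have key : ∫⁻ x in E, ENNReal.ofReal |φ x| ∂μ ≤ ENNReal.ofReal (m ^ (1 - 1/p)) := by
        rw [hres]
        have habs : ∫⁻ x, ENNReal.ofReal |φ x| ∂(volume.restrict (E ∩ Set.Icc (0:ℝ) 1))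
            = ∫⁻ x, ENNReal.ofReal (φ x) ∂(volume.restrict (E ∩ Set.Icc (0:ℝ) 1)) := by
          apply lintegral_congr_ae
          filter_upwards [self_mem_ae_restrict hEI] with x hx
          rw [abs_of_nonneg (hφ0 x hx.2.1)]
        have hnn : 0 ≤ᵐ[volume.restrict (E ∩ Set.Icc (0:ℝ) 1)] φ := by
          filter_upwards [self_mem_ae_restrict hEI] with x hx
          exact hφ0 x hx.2.1
        rw [habs, lintegral_eq_lintegral_meas_lt _ hnn hφm.aemeasurable]
        set G : ℝ → ℝ≥0∞ := fun t => if l ≤ t then 0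
          else min (ENNReal.ofReal m) (ENNReal.ofReal (max a (K * t ^ (-p)))) with hG_def
        have hGm : ∀ t, G t ≤ ENNReal.ofReal m := by
          intro t; rw [hG_def]; dsimp only; split_ifs
          · exact zero_le
          · exact min_le_left _ _
        have hDbound : ∀ t ∈ Set.Ioi (0:ℝ),
            (volume.restrict (E ∩ Set.Icc (0:ℝ) 1)) {x | t < φ x} ≤ G t := by
          intro t ht
          have ht0 : (0:ℝ) < t := ht
          have hSm : MeasurableSet {x : ℝ | t < φ x} := measurableSet_lt measurable_const hφm
          rw [Measure.restrict_apply hSm]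
          by_cases hlt : l ≤ t
          · rw [hG_def]; dsimp only; rw [if_pos hlt]
            have hempty : ({x | t < φ x} ∩ (E ∩ Set.Icc (0:ℝ) 1)) ⊆ ∅ := by
              rintro x ⟨hxf, hxE, hxI⟩
              exfalso
              rw [Set.mem_setOf_eq, hφ x] at hxf
              split_ifs at hxf with h1 h2
              · have hxa0 : 0 < x + a := by
                  have := hxI.1; linarith
                have h5 : (x+a) ^ (-(1/p)) ≤ a ^ (-(1/p)) :=
                  hanti _ _ _ (neg_nonpos.mpr (by positivity)) ha0 (by linarith [hxI.1])
                rw [hal] at h5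
                have h6 := mul_le_mul_of_nonneg_left h5 h1p.le
                nlinarith [mul_pos (one_div_pos.mpr hp0) hl0]
              · linarith
              · linarith
            exact le_of_eq (by rw [Set.subset_empty_iff.mp hempty, measure_empty])
          · push_neg at hlt
            rw [hG_def]; dsimp only; rw [if_neg (not_le.mpr hlt)]
            refine le_min ?_ ?_
            · exact le_trans (measure_mono Set.inter_subset_right) (le_of_eq hvol)
            · set R : ℝ := K * t ^ (-p) - a with hR_def
              have htp0 : (0:ℝ) < t ^ (-p) := Real.rpow_pos_of_pos ht0 _
              have hKt0 : 0 < K * t ^ (-p) := mul_pos hK0 htp0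
              have hsub : {x | t < φ x} ∩ (E ∩ Set.Icc (0:ℝ) 1)
                  ⊆ Set.Icc 0 (min A (max 0 R)) ∪ Set.Ioc (1-a) 1 := by
                rintro x ⟨hxf, hxE, hxI⟩
                rw [Set.mem_setOf_eq, hφ x] at hxf
                split_ifs at hxf with h1 h2
                · left
                  have hx0 : (0:ℝ) ≤ x := hxI.1
                  have hxa0 : 0 < x + a := by linarith
                  have hxR : x + a ≤ K * t ^ (-p) := by
                    by_contra hcon
                    push_neg at hcon
                    have h5 : (x+a) ^ (-(1/p)) ≤ (K * t ^ (-p)) ^ (-(1/p)) :=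
                      hanti _ _ _ (neg_nonpos.mpr (by positivity)) hKt0 hcon.le
                    have h6 : (K * t ^ (-p)) ^ (-(1/p)) = t / (1-1/p) := by
                      rw [hK_def, Real.mul_rpow hK0.le htp0.le,
                        ← Real.rpow_mul h1p.le, ← Real.rpow_mul ht0.le,
                        show p * (-(1/p)) = -1 by field_simp,
                        show (-p) * (-(1/p)) = 1 by field_simp,
                        Real.rpow_one, Real.rpow_neg_one]
                      field_simp [ne_of_gt h1p]
                    rw [h6] at h5
                    have h7 : (1-1/p) * (x+a) ^ (-(1/p)) ≤ t := by
                      have := mul_le_mul_of_nonneg_left h5 h1p.le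
                      calc (1-1/p) * (x+a) ^ (-(1/p)) ≤ (1-1/p) * (t/(1-1/p)) := this
                        _ = t := by field_simp [ne_of_gt h1p]
                    linarith
                  refine ⟨hx0, le_min (le_of_lt h1) ?_⟩
                  have hxR' : x ≤ R := by rw [hR_def]; linarith
                  exact le_trans hxR' (le_max_right 0 R)
                · exfalso; linarith
                · right
                  push_neg at h2
                  exact ⟨h2, hxI.2⟩
              calc volume ({x | t < φ x} ∩ (E ∩ Set.Icc (0:ℝ) 1))
                  ≤ volume (Set.Icc 0 (min A (max 0 R)) ∪ Set.Ioc (1-a) 1) :=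
                    measure_mono hsub
                _ ≤ volume (Set.Icc (0:ℝ) (min A (max 0 R))) + volume (Set.Ioc (1-a) (1:ℝ)) :=
                    measure_union_le _ _
                _ = ENNReal.ofReal (min A (max 0 R)) + ENNReal.ofReal a := by
                    rw [Real.volume_Icc, Real.volume_Ioc, sub_zero,
                      show (1:ℝ) - (1-a) = a by ring]
                _ ≤ ENNReal.ofReal (max a (K * t ^ (-p))) := by
                    rw [← ENNReal.ofReal_add (le_min hA0.le (le_max_left 0 R)) ha0.le]
                    apply ENNReal.ofReal_le_ofReal
                    rcases le_or_gt R 0 with hR0 | hR0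
                    · rw [max_eq_left hR0, min_eq_right hA0.le]
                      simpa using le_max_left a (K * t ^ (-p))
                    · have hm1 : min A (max 0 R) ≤ R := by
                        rw [max_eq_right hR0.le]; exact min_le_right _ _
                      have hRa : R + a = K * t ^ (-p) := by rw [hR_def]; ring
                      exact le_trans (by linarith) (le_max_right a (K * t ^ (-p)))
        have hIl : ∫⁻ t in Set.Ioi l, G t = 0 := by
          have hz : ∀ᵐ t ∂(volume.restrict (Set.Ioi l)), G t = 0 := by
            filter_upwards [self_mem_ae_restrict measurableSet_Ioi] with t htl
            rw [hG_def]; dsimp only; rw [if_pos (le_of_lt htl)]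
          rw [lintegral_congr_ae hz, lintegral_zero]
        calc ∫⁻ t in Set.Ioi (0:ℝ), (volume.restrict (E ∩ Set.Icc (0:ℝ) 1)) {x | t < φ x}
            ≤ ∫⁻ t in Set.Ioi (0:ℝ), G t := by
              apply lintegral_mono_ae
              filter_upwards [self_mem_ae_restrict measurableSet_Ioi] with t ht
              exact hDbound t ht
          _ ≤ ENNReal.ofReal (m ^ (1 - 1/p)) := by
              rcases le_or_gt m a with hma | ham
              · -- small measure case
                have hml : m * l ≤ m ^ (1 - 1/p) := by
                  have h7 : l ≤ m ^ (-(1/p)) := by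
                    have h8 := hanti (-(1/p)) m a (neg_nonpos.mpr (by positivity)) hm0 hma
                    rw [hal] at h8; exact h8
                  have h8 : m ^ ((1:ℝ) - 1/p) = m * m ^ (-(1/p)) := by
                    rw [show (1:ℝ) - 1/p = 1 + -(1/p) by ring, Real.rpow_add hm0, Real.rpow_one]
                  rw [h8]
                  exact mul_le_mul_of_nonneg_left h7 hm0.le
                rw [show Set.Ioi (0:ℝ) = Set.Ioc 0 l ∪ Set.Ioi l from
                    (Set.Ioc_union_Ioi_eq_Ioi hl0.le).symm,
                  lintegral_union measurableSet_Ioi (Set.Ioc_disjoint_Ioi le_rfl), hIl, add_zero]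
                calc ∫⁻ t in Set.Ioc (0:ℝ) l, G t
                    ≤ ∫⁻ _ in Set.Ioc (0:ℝ) l, ENNReal.ofReal m := lintegral_mono hGm
                  _ = ENNReal.ofReal m * ENNReal.ofReal l := by
                      rw [setLIntegral_const, Real.volume_Ioc, sub_zero]
                  _ = ENNReal.ofReal (m * l) := (ENNReal.ofReal_mul hm0.le).symm
                  _ ≤ ENNReal.ofReal (m ^ (1 - 1/p)) := ENNReal.ofReal_le_ofReal hml
              · -- large measure case
                set lm : ℝ := (1 - 1/p) * m ^ (-(1/p)) with hlm_def
                set ts : ℝ := (1 - 1/p) * l with hts_def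
                have hmp0 : 0 < m ^ (-(1/p)) := Real.rpow_pos_of_pos hm0 _
                have hlm0 : 0 < lm := by rw [hlm_def]; exact mul_pos h1p hmp0
                have hts0 : 0 < ts := by rw [hts_def]; exact mul_pos h1p hl0
                have hmnl : m ^ (-(1/p)) ≤ l := by
                  have h8 := hanti (-(1/p)) a m (neg_nonpos.mpr (by positivity)) ha0 ham.le
                  rw [hal] at h8; exact h8
                have hlmts : lm ≤ ts := by
                  rw [hlm_def, hts_def]; exact mul_le_mul_of_nonneg_left hmnl h1p.le
                have htsl : ts < l := by
                  rw [hts_def]; exact mul_lt_of_lt_one_left hl0 (by linarith [one_div_pos.mpr hp0])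
                have hKts : K * ts ^ (-p) = a := by
                  rw [hts_def, hK_def, Real.mul_rpow h1p.le hl0.le, ha_def, ← mul_assoc,
                    ← Real.rpow_add h1p, show p + -p = (0:ℝ) by ring, Real.rpow_zero, one_mul]
                have hsp : Set.Ioi (0:ℝ)
                    = Set.Ioc 0 lm ∪ Set.Ioc lm ts ∪ Set.Ioc ts l ∪ Set.Ioi l := by
                  rw [Set.Ioc_union_Ioc_eq_Ioc hlm0.le hlmts,
                    Set.Ioc_union_Ioc_eq_Ioc (le_trans hlm0.le hlmts) htsl.le,
                    Set.Ioc_union_Ioi_eq_Ioi hl0.le]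
                have d1 : Disjoint (Set.Ioc (0:ℝ) lm) (Set.Ioc lm ts) := by
                  rw [Set.disjoint_left]; rintro x ⟨_, h1⟩ ⟨h2, _⟩; linarith
                have d2 : Disjoint (Set.Ioc (0:ℝ) lm ∪ Set.Ioc lm ts) (Set.Ioc ts l) := by
                  rw [Set.disjoint_left]
                  rintro x hx hy
                  rcases hx with ⟨_, h1⟩ | ⟨_, h1⟩ <;> have := hy.1 <;> linarith
                have d3 : Disjoint (Set.Ioc (0:ℝ) lm ∪ Set.Ioc lm ts ∪ Set.Ioc ts l)
                    (Set.Ioi l) := by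
                  rw [Set.disjoint_left]
                  rintro x hx hy
                  rw [Set.mem_Ioi] at hy
                  rcases hx with (⟨_, h1⟩ | ⟨_, h1⟩) | ⟨_, h1⟩ <;> linarith
                rw [hsp, lintegral_union measurableSet_Ioi d3,
                  lintegral_union measurableSet_Ioc d2,
                  lintegral_union measurableSet_Ioc d1, hIl, add_zero]
                have hI1 : ∫⁻ t in Set.Ioc (0:ℝ) lm, G t ≤ ENNReal.ofReal (m * lm) :=
                  calc ∫⁻ t in Set.Ioc (0:ℝ) lm, G t
                      ≤ ∫⁻ _ in Set.Ioc (0:ℝ) lm, ENNReal.ofReal m := lintegral_mono hGm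
                    _ = ENNReal.ofReal m * ENNReal.ofReal lm := by
                        rw [setLIntegral_const, Real.volume_Ioc, sub_zero]
                    _ = ENNReal.ofReal (m * lm) := (ENNReal.ofReal_mul hm0.le).symm
                have hI2 : ∫⁻ t in Set.Ioc lm ts, G t
                    ≤ ENNReal.ofReal (K * ((ts ^ (-p+1) - lm ^ (-p+1)) / (-p+1))) := by
                  have hb : ∫⁻ t in Set.Ioc lm ts, G t
                      ≤ ∫⁻ t in Set.Ioc lm ts, ENNReal.ofReal (K * t ^ (-p)) := by
                    apply lintegral_mono_ae
                    filter_upwards [self_mem_ae_restrict measurableSet_Ioc] with t htm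
                    rw [hG_def]; dsimp only
                    split_ifs with h
                    · exact zero_le
                    · refine le_trans (min_le_right _ _) (ENNReal.ofReal_le_ofReal ?_)
                      have ht0 : 0 < t := lt_trans hlm0 htm.1
                      have haK : a ≤ K * t ^ (-p) := by
                        rw [← hKts]
                        have h9 := hanti (-p) t ts (by linarith) ht0 htm.2
                        nlinarith
                      rw [max_eq_right haK]
                  refine le_trans hb (le_of_eq ?_)
                  exact aux_lint_rpow K lm ts (-p) hK0.le hlm0 hlmts
                    (fun hcon => absurd (neg_injective hcon) (ne_of_gt hp))
                have hI3 : ∫⁻ t in Set.Ioc ts l, G t ≤ ENNReal.ofReal (a * (l - ts)) := by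
                  have hb : ∫⁻ t in Set.Ioc ts l, G t
                      ≤ ∫⁻ _ in Set.Ioc ts l, ENNReal.ofReal a := by
                    apply lintegral_mono_ae
                    filter_upwards [self_mem_ae_restrict measurableSet_Ioc] with t htm
                    rw [hG_def]; dsimp only
                    split_ifs with h
                    · exact zero_le
                    · refine le_trans (min_le_right _ _) (ENNReal.ofReal_le_ofReal ?_)
                      have hKa : K * t ^ (-p) ≤ a := by
                        rw [← hKts]
                        have h9 := hanti (-p) ts t (by linarith) hts0 htm.1.le
                        nlinarith
                      rw [max_eq_left hKa]
                  refine le_trans hb ?_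
                  rw [setLIntegral_const, Real.volume_Ioc, ← ENNReal.ofReal_mul ha0.le]
                -- the real-number algebra
                have hmulm : (m ^ (-(1/p):ℝ)) ^ (-p+1 : ℝ) = m ^ ((1:ℝ)-1/p) := by
                  rw [← Real.rpow_mul hm0.le]
                  congr 1; field_simp; ring
                have A1 : m * lm = (1-1/p) * m ^ ((1:ℝ)-1/p) := by
                  rw [hlm_def, show (1:ℝ)-1/p = 1 + -(1/p) by ring, Real.rpow_add hm0,
                    Real.rpow_one]
                  ring
                have A2 : K * lm ^ (-p+1 : ℝ) = (1-1/p) * m ^ ((1:ℝ)-1/p) := by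
                  rw [hlm_def, Real.mul_rpow h1p.le hmp0.le, hmulm, hK_def, ← mul_assoc,
                    ← Real.rpow_add h1p, show p + (-p+1) = (1:ℝ) by ring, Real.rpow_one]
                have A3 : K * ts ^ (-p+1 : ℝ) = (1-1/p) * l ^ (-p+1 : ℝ) := by
                  rw [hts_def, Real.mul_rpow h1p.le hl0.le, hK_def, ← mul_assoc,
                    ← Real.rpow_add h1p, show p + (-p+1) = (1:ℝ) by ring, Real.rpow_one]
                have A4 : a * (l - ts) = l ^ (-p+1 : ℝ) / p := by
                  have e5 : l ^ (-p+1 : ℝ) = l ^ (-p:ℝ) * l := by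
                    rw [Real.rpow_add hl0, Real.rpow_one]
                  rw [hts_def, ha_def, e5,
                    show l - (1-1/p)*l = l/p by field_simp; ring]
                  ring
                have nn2 : 0 ≤ K * ((ts ^ (-p+1:ℝ) - lm ^ (-p+1:ℝ)) / (-p+1)) := by
                  apply mul_nonneg hK0.le
                  have h9 := hanti (-p+1) lm ts (by linarith) hlm0 hlmts
                  have h10 : ts ^ (-p+1:ℝ) - lm ^ (-p+1:ℝ) ≤ 0 := by linarith
                  have h11 : (-p+1:ℝ) ≤ 0 := by linarith
                  have := div_nonneg (neg_nonneg.mpr h10) (neg_nonneg.mpr h11)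
                  rwa [neg_div_neg_eq] at this
                have nn3 : 0 ≤ a * (l - ts) := mul_nonneg ha0.le (by linarith)
                have halg : m * lm + K * ((ts ^ (-p+1:ℝ) - lm ^ (-p+1:ℝ)) / (-p+1))
                    + a * (l - ts) = m ^ ((1:ℝ)-1/p) := by
                  have expand : K * ((ts ^ (-p+1:ℝ) - lm ^ (-p+1:ℝ)) / (-p+1))
                      = (K * ts ^ (-p+1:ℝ) - K * lm ^ (-p+1:ℝ)) / (-p+1) := by ring
                  rw [expand, A1, A2, A3, A4]
                  have hpne1 : (-p+1 : ℝ) ≠ 0 := by intro h; linarith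
                  field_simp
                  ring
                calc (∫⁻ t in Set.Ioc (0:ℝ) lm, G t) + (∫⁻ t in Set.Ioc lm ts, G t)
                      + (∫⁻ t in Set.Ioc ts l, G t)
                    ≤ ENNReal.ofReal (m * lm)
                      + ENNReal.ofReal (K * ((ts ^ (-p+1:ℝ) - lm ^ (-p+1:ℝ)) / (-p+1)))
                      + ENNReal.ofReal (a * (l - ts)) :=
                      add_le_add (add_le_add hI1 hI2) hI3
                  _ = ENNReal.ofReal (m * lm + K * ((ts ^ (-p+1:ℝ) - lm ^ (-p+1:ℝ)) / (-p+1))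
                      + a * (l - ts)) := by
                      rw [ENNReal.ofReal_add (add_nonneg (by positivity) nn2) nn3,
                        ENNReal.ofReal_add (by positivity) nn2]
                  _ = ENNReal.ofReal (m ^ ((1:ℝ) - 1/p)) := by rw [halg]
      -- conclude the per-set bound
      rw [hμE]
      calc ENNReal.ofReal m ^ (-1 + 1/p) * ∫⁻ x in E, ENNReal.ofReal |φ x| ∂μ
          ≤ ENNReal.ofReal m ^ (-1 + 1/p) * ENNReal.ofReal (m ^ (1 - 1/p)) :=
            mul_le_mul_right key _
        _ = ENNReal.ofReal m ^ (-1 + 1/p) * ENNReal.ofReal m ^ (1 - 1/p) := by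
            rw [← ENNReal.ofReal_rpow_of_pos hm0]
        _ = ENNReal.ofReal m ^ ((-1 + 1/p) + (1 - 1/p)) := by
            rw [← ENNReal.rpow_add _ _
              (by simp only [ne_eq, ENNReal.ofReal_eq_zero, not_le]; exact hm0)
              ENNReal.ofReal_ne_top]
        _ = 1 := by rw [show (-1 + 1/p) + (1 - 1/p) = (0:ℝ) by ring, ENNReal.rpow_zero]
    refine le_antisymm ?_ ?_
    · simp only [tripleNorm]
      exact iSup_le fun E => iSup_le fun hE => iSup_le fun hpos => hub E hE hpos
    · -- lower bound : the set (1-a, 1] attains the value 1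
      have hmem : Set.Ioc (1-a) 1 ∩ Set.Icc (0:ℝ) 1 = Set.Ioc (1-a) 1 := by
        rw [Set.inter_eq_left]
        rintro x ⟨h1, h2⟩
        exact ⟨by linarith, h2⟩
      have hμI : μ (Set.Ioc (1-a) 1) = ENNReal.ofReal a := by
        rw [hμ, Measure.restrict_apply measurableSet_Ioc, hmem, Real.volume_Ioc]
        congr 1; ring
      have hpos : 0 < μ (Set.Ioc (1-a) 1) := by
        rw [hμI]; exact ENNReal.ofReal_pos.mpr ha0
      have hint : ∫⁻ x in Set.Ioc (1-a) 1, ENNReal.ofReal |φ x| ∂μ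
          = ENNReal.ofReal l * ENNReal.ofReal a := by
        rw [hμ, Measure.restrict_restrict measurableSet_Ioc, hmem]
        have hcongr : ∀ᵐ x ∂(volume.restrict (Set.Ioc (1-a) 1)),
            ENNReal.ofReal |φ x| = ENNReal.ofReal l := by
          filter_upwards [self_mem_ae_restrict measurableSet_Ioc] with x hx
          rw [hφ x, if_neg (not_lt.mpr (by linarith [hx.1] : A ≤ x)),
            if_neg (not_le.mpr hx.1), abs_of_nonneg hl0.le]
        rw [lintegral_congr_ae hcongr, setLIntegral_const, Real.volume_Ioc]
        congr 1; ring
      simp only [tripleNorm]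
      apply le_iSup_of_le (Set.Ioc (1-a) 1)
      apply le_iSup_of_le measurableSet_Ioc
      apply le_iSup_of_le hpos
      rw [hμI, hint, ENNReal.ofReal_rpow_of_pos ha0, ← ENNReal.ofReal_mul hl0.le,
        ← ENNReal.ofReal_mul (Real.rpow_nonneg ha0.le _)]
      have e1 : a ^ (-1+1/p : ℝ) = l ^ (p - 1) := by
        rw [ha_def, ← Real.rpow_mul hl0.le]
        congr 1; field_simp; ring
      have e2 : l * a = l ^ (1 - p : ℝ) := by
        rw [ha_def, show (1:ℝ)-p = 1 + -p by ring, Real.rpow_add hl0, Real.rpow_one]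
      rw [e1, e2, ← Real.rpow_add hl0, show p - 1 + (1-p) = (0:ℝ) by ring, Real.rpow_zero,
        ENNReal.ofReal_one]
end

section
/- Let p > 1, 0 < f ≤ 1, λ > (1/f)^{1/(p−1)}, and set A = f^{p/(p−1)} − 1/λ^p. Define φ(t) = (1 − 1/p)(t + 1/λ^p)^{−1/p} for 0 ≤ t < A and φ(t) = 0 for A ≤ t ≤ 1 − 1/λ^p. Then for every measurable set E ⊆ [0, 1 − 1/λ^p] with |E| > 0, ∫_E φ(s) ds ≤ (|E| + 1/λ^p)^{1−1/p} − (1/λ^p)^{1−1/p}. -/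
open MeasureTheory Set Filter ENNReal

/-- Key inequality (3.6) in the proof of Theorem 3.1: for every measurable
`E ⊆ [0, 1 - 1/λ^p]` of positive measure,
`∫_E φ ≤ (|E| + 1/λ^p)^{1-1/p} - (1/λ^p)^{1-1/p}`. -/
theorem stmt11 (p f l A : ℝ) (hp : 1 < p) (hf : 0 < f) (hf1 : f ≤ 1)
    (hl : (1 / f) ^ (1 / (p - 1)) < l)
    (hA : A = f ^ (p / (p - 1)) - 1 / l ^ p)
    (φ : ℝ → ℝ)
    (hφ : ∀ t, φ t = if t < A then (1 - 1 / p) * (t + 1 / l ^ p) ^ (-(1 / p)) else 0)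
    (E : Set ℝ) (hE : MeasurableSet E) (hEsub : E ⊆ Set.Icc 0 (1 - 1 / l ^ p))
    (hEpos : 0 < MeasureTheory.volume E) :
    ∫ s in E, φ s ≤
      ((MeasureTheory.volume E).toReal + 1 / l ^ p) ^ (1 - 1 / p) -
        (1 / l ^ p) ^ (1 - 1 / p) := by
  have hl0 : 0 < l := lt_trans (Real.rpow_pos_of_pos (by positivity) _) hl
  set c : ℝ := 1 / l ^ p with hc_def
  have hc : 0 < c := by
    have := Real.rpow_pos_of_pos hl0 p
    positivity
  set ψ : ℝ → ℝ := fun t => (1 - 1 / p) * (t + c) ^ (-(1 / p)) with hψ_def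
  have hpp : 0 < 1 - 1 / p := by
    have : 1 / p < 1 := by
      rw [div_lt_one (by linarith)]; linarith
    linarith
  -- finiteness of volume E
  have hEfin : volume E < ⊤ :=
    lt_of_le_of_lt (measure_mono hEsub) (by rw [Real.volume_Icc]; exact ofReal_lt_top)
  set m : ℝ := (volume E).toReal with hm_def
  have hm0 : 0 < m := ENNReal.toReal_pos hEpos.ne' hEfin.ne
  -- continuity of ψ on sets of nonneg reals
  have hψcont : ∀ s : Set ℝ, s ⊆ Ici 0 → ContinuousOn ψ s := by
    intro s hs
    apply ContinuousOn.mul continuousOn_const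
    apply ContinuousOn.rpow_const (by fun_prop)
    intro x hx
    left
    have := hs hx
    simp only [mem_Ici] at this
    positivity
  have hψnonneg : ∀ t, 0 ≤ t → 0 ≤ ψ t := by
    intro t ht
    have : (0:ℝ) ≤ (t + c) ^ (-(1/p)) := Real.rpow_nonneg (by linarith) _
    positivity
  -- ψ antitone on nonneg
  have hψanti : ∀ a b : ℝ, 0 ≤ a → a ≤ b → ψ b ≤ ψ a := by
    intro a b ha hab
    apply mul_le_mul_of_nonneg_left _ hpp.le
    exact Real.rpow_le_rpow_of_nonpos (by linarith) (by linarith) (neg_nonpos.2 (by positivity))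
  -- integrability
  have hψintIcc : ∀ b : ℝ, IntegrableOn ψ (Icc 0 b) :=
    fun b => (hψcont _ (fun x hx => hx.1)).integrableOn_Icc
  have hψE : IntegrableOn ψ E := (hψintIcc (1 - c)).mono_set hEsub
  have hφeq : ∀ t, φ t = (Iio A).indicator ψ t := by
    intro t
    rw [hφ t]
    by_cases h : t < A <;> simp [indicator, Iio, h, hψ_def]
  have hφE : IntegrableOn φ E := by
    have : IntegrableOn ((Iio A).indicator ψ) E := hψE.indicator measurableSet_Iio
    exact this.congr_fun (fun x _ => (hφeq x).symm) hE
  -- step C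
  have stepC : ∫ s in E, φ s ≤ ∫ s in E, ψ s := by
    apply setIntegral_mono_on hφE hψE hE
    intro t ht
    rw [hφeq t]
    by_cases h : t < A
    · simp [indicator, h]
    · simp only [indicator, mem_Iio, h, if_neg]
      simpa using hψnonneg t (hEsub ht).1
  -- step D : ∫_E ψ ≤ ∫_{Icc 0 m} ψ
  have hS : MeasurableSet (Icc (0:ℝ) m) := measurableSet_Icc
  have hvolS : volume (Icc (0:ℝ) m) = ENNReal.ofReal m := by
    rw [Real.volume_Icc]; ring_nf
  have hψS : IntegrableOn ψ (Icc 0 m) := hψintIcc m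
  have hkey : (volume (E \ Icc 0 m)).toReal = (volume (Icc 0 m \ E)).toReal := by
    have h1 : volume (E ∩ Icc 0 m) + volume (E \ Icc 0 m) = volume E :=
      measure_inter_add_diff E hS
    have h2 : volume (Icc 0 m ∩ E) + volume (Icc 0 m \ E) = volume (Icc 0 m) :=
      measure_inter_add_diff _ hE
    rw [inter_comm] at h2
    have hfin1 : volume (E ∩ Icc 0 m) ≠ ⊤ := (lt_of_le_of_lt (measure_mono inter_subset_left) hEfin).ne
    have hfin2 : volume (E \ Icc 0 m) ≠ ⊤ := (lt_of_le_of_lt (measure_mono diff_subset) hEfin).ne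
    have hfinS : volume (Icc (0:ℝ) m) ≠ ⊤ := by rw [hvolS]; exact ofReal_ne_top
    have hfin3 : volume (Icc 0 m \ E) ≠ ⊤ := (lt_of_le_of_lt (measure_mono diff_subset) hfinS.lt_top).ne
    have hmS : (volume (Icc (0:ℝ) m)).toReal = m := by
      rw [hvolS, ENNReal.toReal_ofReal hm0.le]
    have e1 : (volume (E ∩ Icc 0 m)).toReal + (volume (E \ Icc 0 m)).toReal = m := by
      rw [← ENNReal.toReal_add hfin1 hfin2, h1]
    have e2 : (volume (E ∩ Icc 0 m)).toReal + (volume (Icc 0 m \ E)).toReal = m := by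
      rw [← ENNReal.toReal_add hfin1 hfin3, h2, hmS]
    linarith
  have stepD : ∫ s in E, ψ s ≤ ∫ s in Icc 0 m, ψ s := by
    have hsplit1 : ∫ s in E, ψ s = (∫ s in E ∩ Icc 0 m, ψ s) + ∫ s in E \ Icc 0 m, ψ s :=
      (integral_inter_add_diff hS hψE).symm
    have hsplit2 : ∫ s in Icc 0 m, ψ s = (∫ s in E ∩ Icc 0 m, ψ s) + ∫ s in Icc 0 m \ E, ψ s := by
      rw [← integral_inter_add_diff hE hψS, inter_comm]
    rw [hsplit1, hsplit2]
    apply add_le_add le_rfl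
    -- tail comparison
    have htail1 : ∫ s in E \ Icc 0 m, ψ s ≤ (volume (E \ Icc 0 m)).toReal * ψ m := by
      have hint : IntegrableOn ψ (E \ Icc 0 m) := hψE.mono_set diff_subset
      calc ∫ s in E \ Icc 0 m, ψ s ≤ ∫ _ in E \ Icc 0 m, ψ m := by
            apply setIntegral_mono_on hint (integrableOn_const (lt_of_le_of_lt (measure_mono diff_subset) hEfin).ne) (hE.diff hS)
            intro t ht
            have h0 : (0:ℝ) ≤ t := (hEsub ht.1).1
            have : m ≤ t := by
              by_contra h
              exact ht.2 ⟨h0, (not_le.1 h).le⟩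
            exact hψanti m t hm0.le this
        _ = (volume (E \ Icc 0 m)).toReal * ψ m := by
            rw [setIntegral_const]; rw [smul_eq_mul]; rfl
    have htail2 : (volume (Icc 0 m \ E)).toReal * ψ m ≤ ∫ s in Icc 0 m \ E, ψ s := by
      have hint : IntegrableOn ψ (Icc 0 m \ E) := hψS.mono_set diff_subset
      calc (volume (Icc 0 m \ E)).toReal * ψ m = ∫ _ in Icc 0 m \ E, ψ m := by
            rw [setIntegral_const]; rw [smul_eq_mul]; rfl
        _ ≤ ∫ s in Icc 0 m \ E, ψ s := by
            apply setIntegral_mono_on (integrableOn_const (lt_of_le_of_lt (measure_mono diff_subset) (by rw [hvolS]; exact ofReal_lt_top)).ne) hint (hS.diff hE)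
            · intro t ht
              exact hψanti t m ht.1.1 ht.1.2
    calc ∫ s in E \ Icc 0 m, ψ s ≤ (volume (E \ Icc 0 m)).toReal * ψ m := htail1
      _ = (volume (Icc 0 m \ E)).toReal * ψ m := by rw [hkey]
      _ ≤ ∫ s in Icc 0 m \ E, ψ s := htail2
  -- step E : explicit value
  have stepE : ∫ s in Icc 0 m, ψ s = (m + c) ^ (1 - 1/p) - c ^ (1 - 1/p) := by
    rw [MeasureTheory.integral_Icc_eq_integral_Ioc,
      ← intervalIntegral.integral_of_le hm0.le]
    have : ∫ s in (0:ℝ)..m, ψ s = (1 - 1/p) * ∫ s in (0:ℝ)..m, (s + c) ^ (-(1/p)) := by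
      simp [hψ_def, intervalIntegral.integral_const_mul]
    rw [this, intervalIntegral.integral_comp_add_right (fun x => x ^ (-(1/p))) c,
      integral_rpow (Or.inl (by
        have : 1 / p < 1 := by rw [div_lt_one (by linarith)]; linarith
        linarith))]
    have h1 : -(1/p) + 1 = 1 - 1/p := by ring
    rw [h1, zero_add, mul_comm, div_mul_cancel₀ _ (ne_of_gt hpp)]
  calc ∫ s in E, φ s ≤ ∫ s in E, ψ s := stepC
    _ ≤ ∫ s in Icc 0 m, ψ s := stepD
    _ = (m + c) ^ (1 - 1/p) - c ^ (1 - 1/p) := stepE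
end

section
/- Let (X,μ) be a non-atomic probability measure space, T a tree on X, M_T the associated maximal operator, p > 1 and k = p/(p−1). If φ : X → [0,∞) is measurable with ||φ||_{p,∞} ≤ F, then for every λ > 0, μ({x ∈ X : M_T φ(x) ≥ λ}) ≤ k^p F^p/λ^p. -/
open MeasureTheory Set Filter ENNReal

open Topology

section AuxTreeLemmas
variable {X : Type*} [MeasurableSpace X] {μ : Measure X} (T : TreeOn X μ)


lemma level_subset_carrier (m : ℕ) : T.level m ⊆ T.carrier := by
  rw [T.carrier_eq]; exact subset_iUnion T.level m

lemma level_disjoint : ∀ m, ∀ I ∈ T.level m, ∀ J ∈ T.level m, I ≠ J → μ (I ∩ J) = 0 := by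
  intro m
  induction m with
  | zero =>
    intro I hI J hJ hne
    rw [T.level_zero] at hI hJ
    exact absurd (hI.trans hJ.symm) hne
  | succ m ih =>
    intro I hI J hJ hne
    rw [T.level_succ] at hI hJ
    simp only [mem_iUnion, exists_prop] at hI hJ
    obtain ⟨A, hA, hIA⟩ := hI
    obtain ⟨B, hB, hJB⟩ := hJ
    by_cases hAB : A = B
    · subst hAB
      exact T.child_almost_disjoint A (level_subset_carrier T m hA) I hIA J hJB hne
    · exact measure_mono_null
        (inter_subset_inter (T.child_sub A (level_subset_carrier T m hA) I hIA)
          (T.child_sub B (level_subset_carrier T m hB) J hJB)) (ih A hA B hB hAB)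

lemma ancestor_d : ∀ d m I, I ∈ T.level (m + d) → ∃ A ∈ T.level m, I ⊆ A := by
  intro d
  induction d with
  | zero => exact fun m I hI => ⟨I, hI, subset_rfl⟩
  | succ d ih =>
    intro m I hI
    have : I ∈ T.level ((m + d) + 1) := hI
    rw [T.level_succ] at this
    simp only [mem_iUnion, exists_prop] at this
    obtain ⟨P, hP, hIP⟩ := this
    obtain ⟨A, hA, hPA⟩ := ih m P hP
    exact ⟨A, hA, (T.child_sub P (level_subset_carrier T _ hP) I hIP).trans hPA⟩

lemma ancestor {j m : ℕ} (h : j ≤ m) {I : Set X} (hI : I ∈ T.level m) :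
    ∃ A ∈ T.level j, I ⊆ A := by
  have : I ∈ T.level (j + (m - j)) := by rwa [Nat.add_sub_cancel' h]
  exact ancestor_d T (m - j) j I this

lemma level_finite (m : ℕ) : (T.level m).Finite := by
  induction m with
  | zero => rw [T.level_zero]; exact finite_singleton _
  | succ m ih =>
    rw [T.level_succ]
    exact ih.biUnion fun I hI => T.child_finite I (level_subset_carrier T m hI)

lemma carrier_countable : T.carrier.Countable := by
  rw [T.carrier_eq]
  exact countable_iUnion fun m => (level_finite T m).countable

end AuxTreeLemmas

section AuxLayer
variable {X : Type*} [MeasurableSpace X]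


lemma dist_bound (μ : Measure X) (p F : ℝ) (hp : 1 < p) (hF : 0 < F) (φ : X → ℝ)
    (hnorm : weakNorm μ p φ ≤ ENNReal.ofReal F) {t : ℝ} (ht : 0 < t) :
    μ {x | t < |φ x|} ≤ ENNReal.ofReal (F ^ p * t ^ (-p)) := by
  have hterm : ENNReal.ofReal t * μ {x | t < |φ x|} ^ (1/p) ≤ ENNReal.ofReal F := by
    refine le_trans ?_ hnorm
    exact le_iSup₂ (f := fun (l : ℝ) (_ : 0 < l) => ENNReal.ofReal l * μ {x | l < |φ x|} ^ (1/p)) t ht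
  have ht0 : ENNReal.ofReal t ≠ 0 := by simp [ht.le, ht]
  have hdiv : μ {x | t < |φ x|} ^ (1/p) ≤ ENNReal.ofReal F / ENNReal.ofReal t := by
    rw [ENNReal.le_div_iff_mul_le (Or.inl ht0) (Or.inl ENNReal.ofReal_ne_top), mul_comm]
    exact hterm
  have hp0 : (0:ℝ) < p := lt_trans one_pos hp
  have h1 : μ {x | t < |φ x|} = (μ {x | t < |φ x|} ^ (1/p)) ^ p := by
    rw [← ENNReal.rpow_mul, one_div_mul_cancel hp0.ne', ENNReal.rpow_one]
  rw [h1]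
  calc (μ {x | t < |φ x|} ^ (1/p)) ^ p ≤ (ENNReal.ofReal F / ENNReal.ofReal t) ^ p :=
        ENNReal.rpow_le_rpow hdiv hp0.le
    _ = ENNReal.ofReal (F ^ p * t ^ (-p)) := by
        rw [← ENNReal.ofReal_div_of_pos ht, ENNReal.ofReal_rpow_of_pos (div_pos hF ht),
          Real.div_rpow hF.le ht.le, Real.rpow_neg ht.le, div_eq_mul_inv]

lemma layercake (μ : Measure X) [IsProbabilityMeasure μ] (p k F : ℝ) (hp : 1 < p)
    (hk : k = p / (p - 1)) (hF : 0 < F) (φ : X → ℝ) (hφm : Measurable φ)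
    (hnorm : weakNorm μ p φ ≤ ENNReal.ofReal F) (E : Set X) :
    ∫⁻ x in E, ENNReal.ofReal |φ x| ∂μ ≤ ENNReal.ofReal (k * F) * μ E ^ (1 - 1/p) := by
  rcases eq_or_lt_of_le (zero_le : 0 ≤ μ E) with hE0 | hE0
  · have : μ.restrict E = 0 := by
      rw [Measure.restrict_eq_zero]; exact hE0.symm
    rw [this]; simp
  -- main case
  have hp0 : (0:ℝ) < p := lt_trans one_pos hp
  have hp1 : (0:ℝ) < p - 1 := by linarith
  have hk0 : 0 < k := hk ▸ div_pos hp0 hp1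
  set a : ℝ := (μ E).toReal with ha_def
  have hEtop : μ E ≠ ∞ := (lt_of_le_of_lt (prob_le_one) (by norm_num)).ne
  have ha0 : 0 < a := ENNReal.toReal_pos hE0.ne' hEtop
  have haE : μ E = ENNReal.ofReal a := (ENNReal.ofReal_toReal hEtop).symm
  set t0 : ℝ := F * a ^ (-(1/p)) with ht0_def
  have ht0 : 0 < t0 := mul_pos hF (Real.rpow_pos_of_pos ha0 _)
  have habs : Measurable fun x => |φ x| := hφm.abs
  have key : ∫⁻ x in E, ENNReal.ofReal |φ x| ∂μ
      = ∫⁻ t in Ioi (0:ℝ), (μ.restrict E) {x | t < |φ x|} :=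
    lintegral_eq_lintegral_meas_lt (μ.restrict E)
      (Filter.Eventually.of_forall fun x => abs_nonneg _) habs.aemeasurable
  rw [key]
  have hsplit : (Ioi (0:ℝ)) = Ioc 0 t0 ∪ Ioi t0 := (Ioc_union_Ioi_eq_Ioi ht0.le).symm
  rw [hsplit, lintegral_union measurableSet_Ioi Ioc_disjoint_Ioi_same]
  have part1 : ∫⁻ t in Ioc (0:ℝ) t0, (μ.restrict E) {x | t < |φ x|} ≤
      ENNReal.ofReal (a * t0) := by
    calc ∫⁻ t in Ioc (0:ℝ) t0, (μ.restrict E) {x | t < |φ x|}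
        ≤ ∫⁻ _ in Ioc (0:ℝ) t0, μ E := by
          refine lintegral_mono fun t => ?_
          rw [← Measure.restrict_apply_univ (μ := μ) (s := E)]
          exact measure_mono (subset_univ _)
      _ = μ E * volume (Ioc (0:ℝ) t0) := setLIntegral_const _ _
      _ = ENNReal.ofReal (a * t0) := by
          rw [Real.volume_Ioc, haE, ← ENNReal.ofReal_mul ha0.le, sub_zero]
  have part2 : ∫⁻ t in Ioi t0, (μ.restrict E) {x | t < |φ x|} ≤
      ENNReal.ofReal (F ^ p * (-t0 ^ (-p + 1) / (-p + 1))) := by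
    have hbnd : ∀ t ∈ Ioi t0, (μ.restrict E) {x | t < |φ x|} ≤
        ENNReal.ofReal (F ^ p * t ^ (-p)) := by
      intro t ht
      refine le_trans (le_trans (Measure.restrict_le_self _) ?_) le_rfl
      exact dist_bound μ p F hp hF φ hnorm (ht0.trans ht)
    have hint : IntegrableOn (fun t : ℝ => F ^ p * t ^ (-p)) (Ioi t0) := by
      exact (integrableOn_Ioi_rpow_of_lt (by linarith) ht0).const_mul _
    calc ∫⁻ t in Ioi t0, (μ.restrict E) {x | t < |φ x|}
        ≤ ∫⁻ t in Ioi t0, ENNReal.ofReal (F ^ p * t ^ (-p)) := by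
          refine setLIntegral_mono_ae ?_ ?_
          · exact (measurable_const.mul ((measurable_id.pow_const _).comp measurable_id)).ennreal_ofReal.aemeasurable
          · exact Filter.Eventually.of_forall hbnd
      _ = ENNReal.ofReal (∫ t in Ioi t0, F ^ p * t ^ (-p)) := by
          rw [ofReal_integral_eq_lintegral_ofReal hint]
          filter_upwards [ae_restrict_mem measurableSet_Ioi] with t ht
          exact mul_nonneg (Real.rpow_nonneg hF.le _) (Real.rpow_nonneg (ht0.trans ht).le _)
      _ = ENNReal.ofReal (F ^ p * (-t0 ^ (-p + 1) / (-p + 1))) := by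
          rw [MeasureTheory.integral_const_mul, integral_Ioi_rpow_of_lt (by linarith) ht0]
  calc (∫⁻ t in Ioc (0:ℝ) t0, (μ.restrict E) {x | t < |φ x|})
        + ∫⁻ t in Ioi t0, (μ.restrict E) {x | t < |φ x|}
      ≤ ENNReal.ofReal (a * t0) + ENNReal.ofReal (F ^ p * (-t0 ^ (-p + 1) / (-p + 1))) :=
        add_le_add part1 part2
    _ = ENNReal.ofReal (a * t0 + F ^ p * (-t0 ^ (-p + 1) / (-p + 1))) := by
        rw [← ENNReal.ofReal_add]
        · exact mul_nonneg ha0.le ht0.le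
        · refine mul_nonneg (Real.rpow_nonneg hF.le _) ?_
          rw [neg_div, ← div_neg, neg_add, neg_neg]
          exact div_nonneg (Real.rpow_nonneg ht0.le _) (by linarith)
    _ = ENNReal.ofReal (k * F * a ^ (1 - 1/p)) := by
        congr 1
        have e1 : a * t0 = F * a ^ (1 - 1/p) := by
          rw [ht0_def]
          rw [show a * (F * a ^ (-(1/p))) = F * (a ^ (1:ℝ) * a ^ (-(1/p))) by
            rw [Real.rpow_one]; ring]
          rw [← Real.rpow_add ha0, show (1:ℝ) + -(1/p) = 1 - 1/p by ring]
        have e2 : F ^ p * (-t0 ^ (-p + 1) / (-p + 1)) = F * a ^ (1 - 1/p) / (p - 1) := by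
          have hne : -p + 1 ≠ 0 := by intro h; rw [← h] at hp1; linarith
          have hne2 : p - 1 ≠ 0 := hp1.ne'
          have hp0' : p ≠ 0 := hp0.ne'
          have hFc : F ^ p * F ^ (-p + 1) = F := by
            rw [← Real.rpow_add hF, show p + (-p + 1) = (1:ℝ) by ring, Real.rpow_one]
          rw [ht0_def, Real.mul_rpow hF.le (Real.rpow_nonneg ha0.le _), ← Real.rpow_mul ha0.le,
            show -(1/p) * (-p + 1) = 1 - 1/p by field_simp; ring]
          calc F ^ p * (-(F ^ (-p + 1) * a ^ (1 - 1/p)) / (-p + 1))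
              = (F ^ p * F ^ (-p + 1)) * a ^ (1 - 1/p) / (p - 1) := by
                field_simp
                ring
            _ = F * a ^ (1 - 1/p) / (p - 1) := by rw [hFc]
        rw [e1, e2, hk]
        field_simp
        ring
    _ ≤ ENNReal.ofReal (k * F) * μ E ^ (1 - 1/p) := by
        rw [haE, ENNReal.ofReal_rpow_of_pos ha0, ← ENNReal.ofReal_mul (by positivity)]

end AuxLayer

/-- Upper bound in Theorem 4.1: if `‖φ‖_{p,∞} ≤ F` then
`μ({M_T φ ≥ λ}) ≤ k^p F^p/λ^p` for every `λ > 0`, where `k = p/(p-1)`. -/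
theorem stmt13 {X : Type*} [MeasurableSpace X] (μ : MeasureTheory.Measure X)
    [IsProbabilityMeasure μ] (hna : Nonatomic μ) (T : TreeOn X μ)
    (p k : ℝ) (hp : 1 < p) (hk : k = p / (p - 1)) (F : ℝ)
    (φ : X → ℝ) (hφm : Measurable φ) (hφ0 : ∀ x, 0 ≤ φ x)
    (hnorm : weakNorm μ p φ ≤ ENNReal.ofReal F)
    (l : ℝ) (hl : 0 < l) :
    μ {x | ENNReal.ofReal l ≤ maxT μ T φ x} ≤
      ENNReal.ofReal (k ^ p * F ^ p / l ^ p) := by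
  classical
  have hp0 : (0:ℝ) < p := lt_trans one_pos hp
  by_cases hF : 0 < F
  swap
  · -- degenerate case F ≤ 0 : φ = 0 a.e., maximal function is 0
    push_neg at hF
    have hzero : ∀ s : ℝ, 0 < s → μ {x | s < |φ x|} = 0 := by
      intro s hs
      have hterm : ENNReal.ofReal s * μ {x | s < |φ x|} ^ (1/p) ≤ ENNReal.ofReal F :=
        le_trans (le_iSup₂ (f := fun (l : ℝ) (_ : 0 < l) =>
          ENNReal.ofReal l * μ {x | l < |φ x|} ^ (1/p)) s hs) hnorm
      rw [ENNReal.ofReal_eq_zero.mpr hF, le_zero_iff, mul_eq_zero] at hterm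
      rcases hterm with h | h
      · exact absurd h (ENNReal.ofReal_pos.mpr hs).ne'
      · rw [ENNReal.rpow_eq_zero_iff] at h
        rcases h with ⟨h0, _⟩ | ⟨htop, _⟩
        · exact h0
        · exact absurd htop (MeasureTheory.measure_ne_top μ _)
    have hae : ∀ᵐ x ∂μ, ENNReal.ofReal |φ x| = 0 := by
      have hn : μ {x | |φ x| ≠ 0} = 0 := by
        have hsub : {x | |φ x| ≠ 0} ⊆ ⋃ n : ℕ, {x | (1:ℝ)/(n+1) < |φ x|} := by
          intro x hx
          have h0 : 0 < |φ x| := lt_of_le_of_ne (abs_nonneg _) (Ne.symm hx)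
          obtain ⟨n, hn⟩ := exists_nat_one_div_lt h0
          exact mem_iUnion.mpr ⟨n, hn⟩
        exact measure_mono_null hsub
          (measure_iUnion_null fun n => hzero _ (by positivity))
      refine measure_mono_null ?_ hn
      intro x hx
      simp only [mem_setOf_eq] at hx ⊢
      intro h; exact hx (by simp [abs_eq_zero.mp h])
    have hint : ∀ I : Set X, ∫⁻ y in I, ENNReal.ofReal |φ y| ∂μ = 0 := by
      intro I
      rw [lintegral_congr_ae (ae_restrict_of_ae hae), lintegral_zero]
    have hmax : ∀ x, maxT μ T φ x = 0 := by
      intro x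
      simp [maxT, hint, ENNReal.zero_div]
    have hempty : {x | ENNReal.ofReal l ≤ maxT μ T φ x} = ∅ := by
      ext x
      simp [hmax x, le_zero_iff, ENNReal.ofReal_eq_zero, not_le, hl]
    rw [hempty]
    simp
  -- main case : 0 < F
  have hp1 : (0:ℝ) < p - 1 := by linarith
  have hk0 : 0 < k := hk ▸ div_pos hp0 hp1
  suffices h : ∀ t ∈ Ioo (0:ℝ) l,
      μ {x | ENNReal.ofReal l ≤ maxT μ T φ x} ≤ ENNReal.ofReal (k ^ p * F ^ p / t ^ p) by
    have hcont : ContinuousAt (fun t : ℝ => k ^ p * F ^ p / t ^ p) l :=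
      ContinuousAt.div continuousAt_const
        (Real.continuousAt_rpow_const _ _ (Or.inl hl.ne')) (Real.rpow_pos_of_pos hl p).ne'
    have htend : Tendsto (fun t : ℝ => ENNReal.ofReal (k ^ p * F ^ p / t ^ p)) (𝓝[<] l)
        (𝓝 (ENNReal.ofReal (k ^ p * F ^ p / l ^ p))) :=
      ENNReal.continuous_ofReal.continuousAt.tendsto.comp
        (hcont.tendsto.mono_left nhdsWithin_le_nhds)
    exact ge_of_tendsto htend
      (Filter.eventually_of_mem (Ioo_mem_nhdsLT_of_mem ⟨hl, le_rfl⟩) h)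
  rintro t ⟨ht0, htl⟩
  set good : Set X → Prop := fun I => I ∈ T.carrier ∧
    ENNReal.ofReal t * μ I < ∫⁻ y in I, ENNReal.ofReal |φ y| ∂μ with hgood_def
  set C : Set (Set X) :=
    {I | ∃ m, I ∈ T.level m ∧ good I ∧ ∀ j < m, ∀ J ∈ T.level j, I ⊆ J → ¬ good J} with hC_def
  have hCsub : C ⊆ T.carrier := by
    rintro I ⟨m, _, hg, _⟩
    exact hg.1
  have hCcount : C.Countable := (carrier_countable T).mono hCsub
  have cover : ∀ I, good I → ∃ J ∈ C, I ⊆ J := by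
    intro I hgI
    obtain ⟨m, hm⟩ := mem_iUnion.mp (T.carrier_eq ▸ hgI.1)
    have hex : ∃ j, ∃ K, K ∈ T.level j ∧ I ⊆ K ∧ good K := ⟨m, I, hm, subset_rfl, hgI⟩
    obtain ⟨K, hKlev, hIK, hKg⟩ := Nat.find_spec hex
    refine ⟨K, ⟨Nat.find hex, hKlev, hKg, ?_⟩, hIK⟩
    intro j hj J hJlev hKJ hgJ
    exact Nat.find_min hex hj ⟨J, hJlev, hIK.trans hKJ, hgJ⟩
  have disj : ∀ I ∈ C, ∀ J ∈ C, I ≠ J → μ (I ∩ J) = 0 := by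
    rintro I ⟨m, hIm, hIg, hImax⟩ J ⟨m', hJm', hJg, hJmax⟩ hne
    rcases lt_trichotomy m m' with h | h | h
    · obtain ⟨A, hAm, hJA⟩ := ancestor T h.le hJm'
      by_cases hAI : A = I
      · subst hAI
        exact absurd hIg (hJmax m h A hIm hJA)
      · exact measure_mono_null (inter_subset_inter subset_rfl hJA)
          (level_disjoint T m I hIm A hAm (Ne.symm hAI))
    · subst h
      exact level_disjoint T m I hIm J hJm' hne
    · rw [inter_comm]
      obtain ⟨A, hAm', hIA⟩ := ancestor T h.le hIm
      by_cases hAJ : A = J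
      · subst hAJ
        exact absurd hJg (hImax m' h A hJm' hIA)
      · exact measure_mono_null (inter_subset_inter subset_rfl hIA)
          (level_disjoint T m' J hJm' A hAm' (Ne.symm hAJ))
  haveI := hCcount.to_subtype
  set S : Set X := ⋃₀ C with hS_def
  have hsubE : {x | ENNReal.ofReal l ≤ maxT μ T φ x} ⊆ S := by
    intro x hx
    have hx' : ENNReal.ofReal t < maxT μ T φ x :=
      lt_of_lt_of_le ((ENNReal.ofReal_lt_ofReal_iff hl).mpr htl) hx
    simp only [maxT, lt_iSup_iff] at hx'
    obtain ⟨I, hIc, hxI, hlt⟩ := hx'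
    have hmul : ENNReal.ofReal t * μ I < ∫⁻ y in I, ENNReal.ofReal |φ y| ∂μ :=
      ENNReal.mul_lt_of_lt_div hlt
    obtain ⟨J, hJC, hIJ⟩ := cover I ⟨hIc, hmul⟩
    exact ⟨J, hJC, hIJ hxI⟩
  have hSU : S = ⋃ i : C, (i : Set X) := sUnion_eq_iUnion
  have keyineq : ENNReal.ofReal t * μ S ≤ ∫⁻ x in S, ENNReal.ofReal |φ x| ∂μ := by
    rw [hSU]
    have hmeas : ∀ i : C, MeasurableSet (i : Set X) := fun i => T.meas i (hCsub i.2)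
    have hpair : Pairwise (Function.onFun (MeasureTheory.AEDisjoint μ) fun i : C => (i : Set X)) := by
      intro i j hij
      exact disj i i.2 j j.2 fun h => hij (Subtype.ext h)
    calc ENNReal.ofReal t * μ (⋃ i : C, (i : Set X))
        ≤ ENNReal.ofReal t * ∑' i : C, μ (i : Set X) :=
          mul_le_mul_right (measure_iUnion_le _) _
      _ = ∑' i : C, ENNReal.ofReal t * μ (i : Set X) := ENNReal.tsum_mul_left.symm
      _ ≤ ∑' i : C, ∫⁻ x in (i : Set X), ENNReal.ofReal |φ x| ∂μ := by
          refine ENNReal.tsum_le_tsum fun i => ?_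
          obtain ⟨m, hm, hg, _⟩ := i.2
          exact hg.2.le
      _ = ∫⁻ x in ⋃ i : C, (i : Set X), ENNReal.ofReal |φ x| ∂μ :=
          (lintegral_iUnion₀ (fun i => (hmeas i).nullMeasurableSet) hpair _).symm
  have upper := layercake μ p k F hp hk hF φ hφm hnorm S
  by_cases hS0 : μ S = 0
  · exact le_trans (le_trans (measure_mono hsubE) (le_of_eq hS0)) zero_le
  have hStop : μ S ≠ ⊤ := MeasureTheory.measure_ne_top μ S
  have hsplitS : μ S = μ S ^ (1/p) * μ S ^ (1 - 1/p) := by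
    rw [← ENNReal.rpow_add _ _ hS0 hStop, show 1/p + (1 - 1/p) = (1:ℝ) by ring,
      ENNReal.rpow_one]
  have hcancel : ENNReal.ofReal t * μ S ^ (1/p) ≤ ENNReal.ofReal (k * F) := by
    have h2 : ENNReal.ofReal t * μ S ^ (1/p) * μ S ^ (1 - 1/p)
        ≤ ENNReal.ofReal (k * F) * μ S ^ (1 - 1/p) := by
      rw [mul_assoc, ← hsplitS]
      exact keyineq.trans upper
    have hz : μ S ^ (1 - 1/p) ≠ 0 := by
      simp [ENNReal.rpow_eq_zero_iff, hS0, hStop]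
    have htne : μ S ^ (1 - 1/p) ≠ ⊤ := by
      simp [ENNReal.rpow_eq_top_iff, hS0, hStop]
    exact (ENNReal.mul_le_mul_iff_left hz htne).mp h2
  have hfin : μ S ≤ ENNReal.ofReal ((k * F / t) ^ p) := by
    have h3 : μ S ^ (1/p) ≤ ENNReal.ofReal (k * F / t) := by
      rw [ENNReal.ofReal_div_of_pos ht0,
        ENNReal.le_div_iff_mul_le (Or.inl (ENNReal.ofReal_pos.mpr ht0).ne')
          (Or.inl ENNReal.ofReal_ne_top), mul_comm]
      exact hcancel
    calc μ S = (μ S ^ (1/p)) ^ p := by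
          rw [← ENNReal.rpow_mul, one_div_mul_cancel hp0.ne', ENNReal.rpow_one]
      _ ≤ ENNReal.ofReal (k * F / t) ^ p := ENNReal.rpow_le_rpow h3 hp0.le
      _ = ENNReal.ofReal ((k * F / t) ^ p) := ENNReal.ofReal_rpow_of_pos (by positivity)
  have heq : (k * F / t) ^ p = k ^ p * F ^ p / t ^ p := by
    rw [Real.div_rpow (by positivity) ht0.le, Real.mul_rpow hk0.le hF.le]
  exact (measure_mono hsubE).trans (hfin.trans (le_of_eq (by rw [heq])))
end

section
/- Let p > 1, k = p/(p−1), f > 0 and λ > 0 be such that k·(f/λ)^{1−1/p} > f (equivalently λ < (k^p/f)^{1/(p−1)}). Then there exists a strictly decreasing, continuous, convex function G : (0, f/λ] → (0,∞) such that ∫_0^{f/λ} G(t) dt = f, G(t) ≤ t^{−1/p} for every t ∈ (0, f/λ], lim_{t→0⁺} G(t) = +∞, and lim_{t→+∞} t^p · |{ s ∈ (0, f/λ] : G(s) > t }| = 1, where |·| denotes Lebesgue measure. -/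
open MeasureTheory Set Filter ENNReal

lemma aux_convexOn_rpow_neg {q : ℝ} (hq : q < 0) :
    ConvexOn ℝ (Ioi (0:ℝ)) fun x : ℝ => x ^ q := by
  refine convexOn_of_hasDerivWithinAt2_nonneg (convex_Ioi 0)
    (f' := fun x => q * x ^ (q - 1)) (f'' := fun x => q * ((q - 1) * x ^ (q - 1 - 1)))
    ?_ ?_ ?_ ?_
  · exact ContinuousOn.rpow_const continuousOn_id fun x hx => Or.inl (ne_of_gt hx)
  · rw [interior_Ioi]
    intro x hx
    exact (Real.hasDerivAt_rpow_const (Or.inl (ne_of_gt hx))).hasDerivWithinAt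
  · rw [interior_Ioi]
    intro x hx
    exact ((Real.hasDerivAt_rpow_const (p := q - 1)
      (Or.inl (ne_of_gt hx))).const_mul q).hasDerivWithinAt
  · rw [interior_Ioi]
    intro x hx
    have h1 : (0:ℝ) < x ^ (q - 1 - 1) := Real.rpow_pos_of_pos hx _
    have h2 : 0 < q * (q - 1) := mul_pos_of_neg_of_neg hq (by linarith)
    have := mul_pos h2 h1
    nlinarith

lemma aux_convexOn_affine {s : Set ℝ} (hs : Convex ℝ s) (A ε : ℝ) :
    ConvexOn ℝ s fun x : ℝ => A - ε * x := by
  refine ⟨hs, fun x _ y _ a b ha hb hab => ?_⟩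
  simp only [smul_eq_mul]
  have : A - ε * (a * x + b * y) = a * (A - ε * x) + b * (A - ε * y) := by
    linear_combination (-A) * hab
  linarith

lemma aux_integral_curve {p : ℝ} (hp : 1 < p) {b : ℝ} (hb : 0 ≤ b) :
    ∫ t in Ioc (0:ℝ) b, t ^ (-(1/p)) = (p / (p - 1)) * b ^ (1 - 1/p) := by
  have hp0 : 0 < p := lt_trans one_pos hp
  have h1 : 1/p < 1 := by rw [div_lt_one hp0]; exact hp
  have h2 : (-1:ℝ) < -(1/p) := by linarith
  have h3 : (0:ℝ) < 1 - 1/p := by linarith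
  rw [← intervalIntegral.integral_of_le hb, integral_rpow (Or.inl h2)]
  have h4 : -(1/p) + 1 = 1 - 1/p := by ring
  rw [Real.zero_rpow (by linarith : -(1/p) + 1 ≠ 0), h4, sub_zero]
  rw [div_eq_iff (ne_of_gt h3)]
  have h5 : p / (p - 1) * (1 - 1/p) = 1 := by
    rw [div_mul_eq_mul_div, div_eq_one_iff_eq (by linarith : p - 1 ≠ 0)]
    field_simp
  nlinarith [Real.rpow_nonneg hb (1 - 1/p), h5]

lemma aux_integrable_curve {p : ℝ} (hp : 1 < p) {b : ℝ} (hb : 0 ≤ b) :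
    IntegrableOn (fun t : ℝ => t ^ (-(1/p))) (Ioc 0 b) := by
  have hp0 : 0 < p := lt_trans one_pos hp
  have h1 : 1/p < 1 := by rw [div_lt_one hp0]; exact hp
  have h2 : (-1:ℝ) < -(1/p) := by linarith
  exact (intervalIntegrable_iff_integrableOn_Ioc_of_le hb).mp
    (intervalIntegral.intervalIntegrable_rpow' h2)

set_option maxHeartbeats 2000000 in
/-- Auxiliary construction in Theorem 4.1: existence of a strictly decreasing, continuous,
convex `G : (0, f/λ] → (0,∞)` with `∫_0^{f/λ} G = f`, `G(t) ≤ t^{-1/p}`,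
`G(t) → ∞` as `t → 0⁺`, and `t^p · |{G > t}| → 1` as `t → ∞`. -/
theorem stmt16 (p k f l : ℝ) (hp : 1 < p) (hk : k = p / (p - 1))
    (hf : 0 < f) (hl : 0 < l) (hcond : f < k * (f / l) ^ (1 - 1 / p)) :
    ∃ G : ℝ → ℝ,
      StrictAntiOn G (Set.Ioc 0 (f / l)) ∧
      ContinuousOn G (Set.Ioc 0 (f / l)) ∧
      ConvexOn ℝ (Set.Ioc 0 (f / l)) G ∧
      (∀ t ∈ Set.Ioc 0 (f / l), 0 < G t) ∧
      (∫ t in Set.Ioc 0 (f / l), G t = f) ∧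
      (∀ t ∈ Set.Ioc 0 (f / l), G t ≤ t ^ (-(1 / p))) ∧
      Filter.Tendsto G (nhdsWithin 0 (Set.Ioi 0)) Filter.atTop ∧
      Filter.Tendsto
        (fun t : ℝ => t ^ p *
          (MeasureTheory.volume {s ∈ Set.Ioc 0 (f / l) | t < G s}).toReal)
        Filter.atTop (nhds 1) := by
  have hp0 : 0 < p := lt_trans one_pos hp
  have hp1 : 0 < p - 1 := by linarith
  have hinvp : 0 < 1/p := by positivity
  have hinvp1 : 1/p < 1 := by rw [div_lt_one hp0]; exact hp
  have hq : -(1/p) < 0 := by linarith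
  have hqe : 0 < 1 - 1/p := by linarith
  have hk0 : 0 < k := by rw [hk]; positivity
  set a := f / l with ha_def
  clear_value a
  have ha : 0 < a := ha_def ▸ div_pos hf hl
  set A := min (f / a) (a ^ (-(1/p))) / 2 with hA_def
  clear_value A
  have hapow : 0 < a ^ (-(1/p)) := Real.rpow_pos_of_pos ha _
  have hA0 : 0 < A := by
    rw [hA_def]; apply div_pos (lt_min (div_pos hf ha) hapow); norm_num
  have hAa : A * a ≤ f / 2 := by
    have h1 : A ≤ f / a / 2 := by
      rw [hA_def]; gcongr; exact min_le_left _ _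
    have h2 : A * a ≤ f / a / 2 * a := mul_le_mul_of_nonneg_right h1 ha.le
    have h3 : f / a / 2 * a = f / 2 := by field_simp
    linarith
  have hA_lt : A < a ^ (-(1/p)) := by
    have h1 : A ≤ a ^ (-(1/p)) / 2 := by
      rw [hA_def]; gcongr; exact min_le_right _ _
    linarith
  set ε := A / (2 * a) with hε_def
  clear_value ε
  have hε0 : 0 < ε := by rw [hε_def]; positivity
  have hεa : ε * a = A / 2 := by rw [hε_def]; field_simp
  set δ := (f / (8 * k)) ^ (p / (p - 1)) with hδ_def
  clear_value δ
  have hδ0 : 0 < δ := hδ_def ▸ Real.rpow_pos_of_pos (by positivity) _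
  set C := δ ^ (-(1/p)) with hC_def
  clear_value C
  have hC0 : 0 < C := hC_def ▸ Real.rpow_pos_of_pos hδ0 _
  have hline_int : IntegrableOn (fun t : ℝ => A - ε * t) (Ioc 0 a) :=
    (continuous_const.sub (continuous_const.mul continuous_id)).integrableOn_Ioc
  -- integrability of the candidate functions
  have hG_int : ∀ c : ℝ,
      IntegrableOn (fun t : ℝ => max (t ^ (-(1/p)) - c) (A - ε * t)) (Ioc 0 a) := by
    intro c
    have h1 : IntegrableOn (fun t : ℝ => t ^ (-(1/p)) - c) (Ioc 0 a) :=
      (aux_integrable_curve hp ha.le).sub ((integrableOn_const_iff (by simp)).mpr (Or.inr measure_Ioc_lt_top))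
    have h2 := h1.sup hline_int
    exact IntegrableOn.congr_fun h2 (fun x _ => rfl) measurableSet_Ioc
  set I : ℝ → ℝ := fun c => ∫ t in Ioc 0 a, max (t ^ (-(1/p)) - c) (A - ε * t) with hI_def
  have hvol : (volume (Ioc (0:ℝ) a)).toReal = a := by
    rw [Real.volume_Ioc, sub_zero, ENNReal.toReal_ofReal ha.le]
  have hlip : LipschitzWith (Real.toNNReal a) I := by
    apply LipschitzWith.of_dist_le_mul
    intro c₁ c₂
    rw [Real.dist_eq, Real.dist_eq, Real.coe_toNNReal a ha.le]
    have hsub : I c₁ - I c₂ = ∫ t in Ioc 0 a,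
        (max (t ^ (-(1/p)) - c₁) (A - ε * t) - max (t ^ (-(1/p)) - c₂) (A - ε * t)) :=
      (integral_sub (hG_int c₁) (hG_int c₂)).symm
    have hptw : ∀ t ∈ Ioc (0:ℝ) a,
        |max (t ^ (-(1/p)) - c₁) (A - ε * t) - max (t ^ (-(1/p)) - c₂) (A - ε * t)|
          ≤ |c₁ - c₂| := by
      intro t _
      have := abs_max_sub_max_le_abs (t ^ (-(1/p)) - c₁) (t ^ (-(1/p)) - c₂) (A - ε * t)
      have heq : t ^ (-(1/p)) - c₁ - (t ^ (-(1/p)) - c₂) = -(c₁ - c₂) := by ring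
      rwa [heq, abs_neg] at this
    calc |I c₁ - I c₂|
        ≤ ∫ t in Ioc 0 a, |max (t ^ (-(1/p)) - c₁) (A - ε * t)
            - max (t ^ (-(1/p)) - c₂) (A - ε * t)| := by
          rw [hsub]
          simpa [Real.norm_eq_abs] using
            norm_integral_le_integral_norm (μ := volume.restrict (Ioc 0 a))
              (f := fun t : ℝ => max (t ^ (-(1/p)) - c₁) (A - ε * t)
                - max (t ^ (-(1/p)) - c₂) (A - ε * t))
      _ ≤ ∫ _ in Ioc (0:ℝ) a, |c₁ - c₂| := by
          apply setIntegral_mono_on ((hG_int c₁).sub (hG_int c₂)).abs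
            ((integrableOn_const_iff (by simp)).mpr (Or.inr measure_Ioc_lt_top)) measurableSet_Ioc hptw
      _ = a * |c₁ - c₂| := by
          rw [setIntegral_const, measureReal_def, hvol, smul_eq_mul]
  have hIcont : ContinuousOn I (Icc 0 C) := hlip.continuous.continuousOn
  have hI0 : I 0 = k * a ^ (1 - 1/p) := by
    have heq : EqOn (fun t : ℝ => max (t ^ (-(1/p)) - 0) (A - ε * t))
        (fun t : ℝ => t ^ (-(1/p))) (Ioc 0 a) := by
      intro t ht
      simp only [sub_zero]
      apply max_eq_left
      have h1 : a ^ (-(1/p)) ≤ t ^ (-(1/p)) :=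
        Real.rpow_le_rpow_of_nonpos ht.1 ht.2 hq.le
      nlinarith [mul_pos hε0 ht.1]
    rw [hI_def]
    simp only []
    rw [setIntegral_congr_fun measurableSet_Ioc heq, aux_integral_curve hp ha.le, hk]
  have hIC : I C ≤ f / 2 + f / 8 := by
    have hInd : IntegrableOn
        (Set.indicator (Ioc 0 δ) (fun t : ℝ => t ^ (-(1/p)))) (Ioc 0 a) :=
      (((aux_integrable_curve hp hδ0.le).integrable_indicator
        measurableSet_Ioc)).integrableOn
    have hRHSint : IntegrableOn
        (fun t : ℝ => A + Set.indicator (Ioc 0 δ) (fun t : ℝ => t ^ (-(1/p))) t)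
        (Ioc 0 a) :=
      ((integrableOn_const_iff (by simp)).mpr (Or.inr measure_Ioc_lt_top)).add hInd
    have hmono : I C ≤ ∫ t in Ioc 0 a,
        (A + Set.indicator (Ioc 0 δ) (fun t : ℝ => t ^ (-(1/p))) t) := by
      apply setIntegral_mono_on (hG_int C) hRHSint measurableSet_Ioc
      intro t ht
      by_cases htδ : t ≤ δ
      · have hmem : t ∈ Ioc 0 δ := ⟨ht.1, htδ⟩
        rw [Set.indicator_of_mem hmem]
        apply max_le
        · linarith [hC0, hA0]
        · linarith [Real.rpow_pos_of_pos ht.1 (-(1/p)), mul_pos hε0 ht.1]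
      · rw [Set.indicator_of_notMem (fun hmem => htδ hmem.2)]
        apply max_le
        · have h1 : t ^ (-(1/p)) ≤ C := by
            rw [hC_def]
            exact Real.rpow_le_rpow_of_nonpos hδ0 (le_of_not_ge htδ) hq.le
          linarith
        · nlinarith [mul_pos hε0 ht.1]
    have hsplit : ∫ t in Ioc 0 a,
        (A + Set.indicator (Ioc 0 δ) (fun t : ℝ => t ^ (-(1/p))) t)
        = A * a + ∫ t in Ioc 0 (min a δ), t ^ (-(1/p)) := by
      rw [integral_add ((integrableOn_const_iff (C := A) (by simp)).mpr (Or.inr measure_Ioc_lt_top)) hInd]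
      rw [setIntegral_const, measureReal_def, hvol, smul_eq_mul, mul_comm]
      congr 1
      rw [setIntegral_indicator measurableSet_Ioc, Ioc_inter_Ioc, max_self]
    have hcurve_small : ∫ t in Ioc 0 (min a δ), t ^ (-(1/p)) ≤ f / 8 := by
      rw [aux_integral_curve hp (le_min ha.le hδ0.le)]
      have h1 : (min a δ) ^ (1 - 1/p) ≤ δ ^ (1 - 1/p) :=
        Real.rpow_le_rpow (le_min ha.le hδ0.le) (min_le_right _ _) hqe.le
      have h2 : δ ^ (1 - 1/p) = f / (8 * k) := by
        rw [hδ_def, ← Real.rpow_mul (by positivity)]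
        have : p / (p - 1) * (1 - 1/p) = 1 := by
          rw [div_mul_eq_mul_div, div_eq_one_iff_eq (by linarith : p - 1 ≠ 0)]
          field_simp
        rw [this, Real.rpow_one]
      have h3 : p / (p - 1) * (f / (8 * k)) = f / 8 := by
        rw [← hk]; field_simp
      nlinarith [h1, h2, h3, div_pos hp0 hp1]
    linarith [hmono, hsplit, hcurve_small, hAa]
  -- IVT
  have hmemI : f ∈ Icc (I C) (I 0) := by
    constructor
    · linarith
    · rw [hI0]; exact hcond.le
  obtain ⟨c, hcmem, hcI⟩ := intermediate_value_Icc' hC0.le hIcont hmemI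
  obtain ⟨hc0, hcC⟩ := hcmem
  -- the function G
  refine ⟨fun t => max (t ^ (-(1/p)) - c) (A - ε * t), ?_, ?_, ?_, ?_, ?_, ?_, ?_, ?_⟩
  -- 1. StrictAntiOn
  · intro x hx y hy hxy
    have h1 : y ^ (-(1/p)) < x ^ (-(1/p)) := Real.rpow_lt_rpow_of_neg hx.1 hxy hq
    have h2 : ε * x < ε * y := mul_lt_mul_of_pos_left hxy hε0
    exact max_lt_max (by linarith) (by linarith)
  -- 2. ContinuousOn
  · have c1 : ContinuousOn (fun t : ℝ => t ^ (-(1/p)) - c) (Ioc 0 a) :=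
      (ContinuousOn.rpow_const continuousOn_id
        (fun x hx => Or.inl (ne_of_gt hx.1))).sub continuousOn_const
    have c2 : ContinuousOn (fun t : ℝ => A - ε * t) (Ioc 0 a) :=
      (continuous_const.sub (continuous_const.mul continuous_id)).continuousOn
    exact fun x hx => Filter.Tendsto.max (c1 x hx) (c2 x hx)
  -- 3. ConvexOn
  · have h1 : ConvexOn ℝ (Ioc 0 a) fun t : ℝ => t ^ (-(1/p)) - c := by
      have h1' := (aux_convexOn_rpow_neg hq).subset Ioc_subset_Ioi_self (convex_Ioc 0 a)
      have := h1'.add (convexOn_const (-c) (convex_Ioc 0 a))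
      exact this.congr (fun x _ => by simp [sub_eq_add_neg])
    have h2 := aux_convexOn_affine (convex_Ioc (0:ℝ) a) A ε
    have h3 := h1.sup h2
    have hfun : (fun t : ℝ => max (t ^ (-(1/p)) - c) (A - ε * t))
        = ((fun t : ℝ => t ^ (-(1/p)) - c) ⊔ (fun t : ℝ => A - ε * t)) := by
      funext t; simp [Pi.sup_apply]
    rw [hfun]; exact h3
  -- 4. positivity
  · intro t ht
    have h1 : ε * t ≤ ε * a := mul_le_mul_of_nonneg_left ht.2 hε0.le
    have h2 : A - ε * t ≥ A / 2 := by rw [ge_iff_le, le_sub_iff_add_le]; linarith [hεa]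
    exact lt_of_lt_of_le (by linarith) (le_max_right _ _)
  -- 5. integral
  · exact hcI
  -- 6. bound by the curve
  · intro t ht
    apply max_le
    · linarith
    · have h1 : a ^ (-(1/p)) ≤ t ^ (-(1/p)) :=
        Real.rpow_le_rpow_of_nonpos ht.1 ht.2 hq.le
      nlinarith [mul_pos hε0 ht.1]
  -- 7. blow-up at 0
  · have hcomp : Tendsto (fun t : ℝ => t ^ (-(1/p))) (nhdsWithin 0 (Ioi 0)) atTop := by
      have h1 : Tendsto (fun x : ℝ => (x⁻¹) ^ (1/p)) (nhdsWithin 0 (Ioi 0)) atTop :=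
        (tendsto_rpow_atTop hinvp).comp tendsto_inv_nhdsGT_zero
      apply h1.congr'
      filter_upwards [self_mem_nhdsWithin] with x hx
      rw [Real.inv_rpow (le_of_lt hx), ← Real.rpow_neg (le_of_lt hx)]
    have h2 : Tendsto (fun t : ℝ => t ^ (-(1/p)) - c) (nhdsWithin 0 (Ioi 0)) atTop := by
      simpa [sub_eq_add_neg] using tendsto_atTop_add_const_right _ (-c) hcomp
    exact tendsto_atTop_mono (fun t => le_max_left _ _) h2
  -- 8. the tail behaviour
  · have hT : Tendsto (fun t : ℝ => t / (t + c)) atTop (nhds 1) := by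
      have h₁ : Tendsto (fun t : ℝ => t + c) atTop atTop :=
        tendsto_atTop_add_const_right _ c tendsto_id
      have h₂ : Tendsto (fun t : ℝ => c / (t + c)) atTop (nhds 0) :=
        Tendsto.div_atTop tendsto_const_nhds h₁
      have h₃ := h₂.const_sub 1
      rw [sub_zero] at h₃
      apply h₃.congr'
      filter_upwards [eventually_ge_atTop 1] with t ht
      have htc : 0 < t + c := by linarith
      field_simp
      ring
    have hTp : Tendsto (fun t : ℝ => (t / (t + c)) ^ p) atTop (nhds 1) := by
      have := hT.rpow_const (p := p) (Or.inl one_ne_zero)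
      simpa using this
    apply hTp.congr'
    filter_upwards [eventually_ge_atTop (max (max A (a ^ (-(1/p)))) 1)] with t ht
    have ht1 : (1:ℝ) ≤ t := le_trans (le_max_right _ _) ht
    have ht0 : 0 < t := by linarith
    have htA : A ≤ t := le_trans (le_trans (le_max_left _ _) (le_max_left _ _)) ht
    have hta : a ^ (-(1/p)) ≤ t := le_trans (le_trans (le_max_right _ _) (le_max_left _ _)) ht
    have htc : 0 < t + c := by linarith
    have hr0 : 0 < (t + c) ^ (-p) := Real.rpow_pos_of_pos htc _
    have hra : (t + c) ^ (-p) ≤ a := by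
      have h1 : a ^ (-(1/p)) ≤ t + c := by linarith
      have h2 : (t + c) ^ (-p) ≤ (a ^ (-(1/p))) ^ (-p) :=
        Real.rpow_le_rpow_of_nonpos hapow h1 (by linarith)
      have h3 : (a ^ (-(1/p))) ^ (-p) = a := by
        rw [← Real.rpow_mul ha.le]
        have : -(1/p) * -p = 1 := by field_simp
        rw [this, Real.rpow_one]
      linarith
    have hset : {s ∈ Ioc 0 a | t < max (s ^ (-(1/p)) - c) (A - ε * s)}
        = Ioo 0 ((t + c) ^ (-p)) := by
      ext s
      simp only [mem_setOf_eq, mem_Ioc, mem_Ioo]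
      constructor
      · rintro ⟨⟨hs0, hsa⟩, hts⟩
        refine ⟨hs0, ?_⟩
        have hline : A - ε * s < t := by nlinarith [mul_pos hε0 hs0]
        have hcurve : t < s ^ (-(1/p)) - c := by
          rcases lt_max_iff.mp hts with h | h
          · exact h
          · linarith
        have h1 : t + c < s ^ (-(1/p)) := by linarith
        have h2 : (s ^ (-(1/p))) ^ (-p) < (t + c) ^ (-p) :=
          Real.rpow_lt_rpow_of_neg htc h1 (by linarith)
        have h3 : (s ^ (-(1/p))) ^ (-p) = s := by
          rw [← Real.rpow_mul hs0.le]
          have : -(1/p) * -p = 1 := by field_simp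
          rw [this, Real.rpow_one]
        linarith
      · rintro ⟨hs0, hsr⟩
        have h2 : ((t + c) ^ (-p)) ^ (-(1/p)) < s ^ (-(1/p)) :=
          Real.rpow_lt_rpow_of_neg hs0 hsr hq
        have h3 : ((t + c) ^ (-p)) ^ (-(1/p)) = t + c := by
          rw [← Real.rpow_mul htc.le]
          have : -p * -(1/p) = 1 := by field_simp
          rw [this, Real.rpow_one]
        refine ⟨⟨hs0, le_trans hsr.le hra⟩, ?_⟩
        have h4 : t < s ^ (-(1/p)) - c := by linarith
        exact lt_of_lt_of_le h4 (le_max_left _ _)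
    rw [hset, Real.volume_Ioo, sub_zero, ENNReal.toReal_ofReal hr0.le]
    rw [Real.div_rpow ht0.le htc.le, Real.rpow_neg htc.le, div_eq_mul_inv]
end

section
/- Let M > 0, let h : [0,M] → [0,∞) be Lebesgue integrable with (1/M) ∫_0^M h(t) dt = λ for some λ > 0, and let (a_j)_{j≥1} be a sequence of positive reals with Σ_j a_j = M. Then there exist pairwise disjoint Lebesgue measurable sets A_j ⊆ [0,M] with |A_j| = a_j for every j, Σ_j |A_j| = M, and (1/a_j) ∫_{A_j} h(t) dt = λ for every j. -/
open MeasureTheory Set Filter ENNReal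

lemma habs_aux (M : ℝ) (h : ℝ → ℝ) (hmeas : Measurable h) (h0 : ∀ t, 0 ≤ h t)
    (hint : MeasureTheory.IntegrableOn h (Set.Icc 0 M)) :
    ∀ ε : ℝ, 0 < ε → ∃ δ : ℝ, 0 < δ ∧ ∀ E : Set ℝ, MeasurableSet E → E ⊆ Set.Icc 0 M →
      MeasureTheory.volume E < ENNReal.ofReal δ → ∫ t in E, h t < ε := by
  intro ε hε
  set μ := (volume : Measure ℝ).restrict (Set.Icc 0 M) with hμ
  have hfin : ∫⁻ t, ENNReal.ofReal (h t) ∂μ ≠ ∞ := hint.lintegral_lt_top.ne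
  obtain ⟨δ', hδ'pos, hδ'⟩ := exists_pos_setLIntegral_lt_of_measure_lt hfin
    (ε := ENNReal.ofReal ε) (ENNReal.ofReal_pos.mpr hε).ne'
  have key : ∀ E : Set ℝ, MeasurableSet E → E ⊆ Set.Icc 0 M →
      MeasureTheory.volume E < δ' → ∫ t in E, h t < ε := by
    intro E hE hEsub hEvol
    have hμE : μ E < δ' := by
      rw [hμ, Measure.restrict_apply hE]
      exact lt_of_le_of_lt (measure_mono Set.inter_subset_left) hEvol
    have hres : μ.restrict E = (volume : Measure ℝ).restrict E := by
      rw [hμ, Measure.restrict_restrict hE, Set.inter_eq_left.mpr hEsub]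
    have hlint : ∫⁻ t in E, ENNReal.ofReal (h t) < ENNReal.ofReal ε := by
      have := hδ' E hμE
      rwa [hres] at this
    have heq : ∫ t in E, h t = (∫⁻ t in E, ENNReal.ofReal (h t)).toReal := by
      rw [integral_eq_lintegral_of_nonneg_ae (Filter.Eventually.of_forall h0)
        hmeas.aestronglyMeasurable]
    rw [heq]
    exact ENNReal.toReal_lt_of_lt_ofReal hlint
  rcases eq_or_ne δ' ∞ with hδtop | hδtop
  · refine ⟨1, one_pos, fun E hE hsub hvol => key E hE hsub ?_⟩
    rw [hδtop]
    exact lt_of_le_of_lt (le_trans (measure_mono hsub) (le_of_eq Real.volume_Icc))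
      (by simp [ENNReal.ofReal_lt_top])
  · refine ⟨δ'.toReal, ENNReal.toReal_pos hδ'pos.ne' hδtop, fun E hE hsub hvol => key E hE hsub ?_⟩
    rwa [ENNReal.ofReal_toReal hδtop] at hvol


lemma step_ex (l p n aa u₀ v₀ : ℝ) (Φ Ψ : ℝ → ℝ)
    (ha : 0 < aa)
    (hu : u₀ ∈ Set.Icc 0 p) (hv : v₀ ∈ Set.Icc 0 n)
    (hsum : u₀ + v₀ + aa ≤ p + n)
    (hglob : Φ p + Ψ n = l * (p + n))
    (hinv : Φ u₀ + Ψ v₀ = l * (u₀ + v₀))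
    (hΦc : ContinuousOn Φ (Set.Icc 0 p)) (hΨc : ContinuousOn Ψ (Set.Icc 0 n))
    (hΦlow : ∀ x y, 0 ≤ x → x ≤ y → y ≤ p → l * (y - x) ≤ Φ y - Φ x)
    (hΨup : ∀ x y, 0 ≤ x → x ≤ y → y ≤ n → Ψ y - Ψ x ≤ l * (y - x)) :
    ∃ u' v', u₀ ≤ u' ∧ u' ≤ p ∧ v₀ ≤ v' ∧ v' ≤ n ∧ u' + v' = u₀ + v₀ + aa ∧
      Φ u' + Ψ v' = l * (u' + v') := by
  obtain ⟨hu0, hup⟩ := hu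
  obtain ⟨hv0, hvn⟩ := hv
  set lo := max u₀ (u₀ + aa - (n - v₀)) with hlo
  set hi := min (u₀ + aa) p with hhi
  have hlohi : lo ≤ hi := by
    apply max_le <;> apply le_min <;> linarith
  set w : ℝ → ℝ := fun x => v₀ + aa - (x - u₀) with hw
  set θ : ℝ → ℝ := fun x => Φ x + Ψ (w x) - (Φ u₀ + Ψ v₀) - l * aa with hθ
  have hmaps : ∀ x ∈ Set.Icc lo hi, x ∈ Set.Icc 0 p ∧ w x ∈ Set.Icc 0 n := by
    intro x ⟨hx1, hx2⟩
    have h1 : u₀ ≤ x := le_trans (le_max_left _ _) hx1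
    have h2 : u₀ + aa - (n - v₀) ≤ x := le_trans (le_max_right _ _) hx1
    have h3 : x ≤ u₀ + aa := le_trans hx2 (min_le_left _ _)
    have h4 : x ≤ p := le_trans hx2 (min_le_right _ _)
    refine ⟨⟨by linarith, h4⟩, ?_⟩
    rw [Set.mem_Icc]
    constructor <;> simp only [hw] <;> linarith
  have hθc : ContinuousOn θ (Set.Icc lo hi) := by
    apply ContinuousOn.sub
    apply ContinuousOn.sub
    apply ContinuousOn.add
    · exact hΦc.mono (fun x hx => (hmaps x hx).1)
    · exact hΨc.comp ((continuous_const.sub (continuous_id.sub continuous_const)).continuousOn)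
        (fun x hx => (hmaps x hx).2)
    · exact continuousOn_const
    · exact continuousOn_const
  have hθlo : θ lo ≤ 0 := by
    rcases le_total (u₀ + aa - (n - v₀)) u₀ with hc | hc
    · rw [hlo, max_eq_left hc]
      have hwu : w u₀ = v₀ + aa := by simp only [hw]; ring
      have := hΨup v₀ (v₀ + aa) hv0 (by linarith) (by linarith)
      simp only [hθ]; rw [hwu]; linarith
    · rw [hlo, max_eq_right hc]
      set x := u₀ + aa - (n - v₀) with hx
      have hwx : w x = n := by simp only [hw, hx]; ring
      have h1 := hΦlow x p (by linarith) (by linarith) le_rfl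
      simp only [hθ]; rw [hwx]; simp only [hx]; simp only [hx] at h1; nlinarith [h1, hglob, hinv]
  have hθhi : 0 ≤ θ hi := by
    rcases le_total (u₀ + aa) p with hc | hc
    · rw [hhi, min_eq_left hc]
      have hwu : w (u₀ + aa) = v₀ := by simp only [hw]; ring
      have := hΦlow u₀ (u₀ + aa) hu0 (by linarith) hc
      simp only [hθ]; rw [hwu]; linarith
    · rw [hhi, min_eq_right hc]
      have hwp0 : 0 ≤ w p := by simp only [hw]; linarith
      have hwpn : w p ≤ n := by simp only [hw]; linarith
      have h1 := hΨup (w p) n hwp0 hwpn le_rfl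
      simp only [hθ]; simp only [hw] at h1 ⊢; nlinarith [h1, hglob, hinv]
  obtain ⟨x, hxmem, hθx⟩ : ∃ x ∈ Set.Icc lo hi, θ x = 0 := by
    have := intermediate_value_Icc hlohi hθc
    have h0 : (0:ℝ) ∈ Set.Icc (θ lo) (θ hi) := ⟨hθlo, hθhi⟩
    obtain ⟨x, hx, hfx⟩ := this h0
    exact ⟨x, hx, hfx⟩
  have h1 : u₀ ≤ x := le_trans (le_max_left _ _) hxmem.1
  have h2 : u₀ + aa - (n - v₀) ≤ x := le_trans (le_max_right _ _) hxmem.1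
  have h3 : x ≤ u₀ + aa := le_trans hxmem.2 (min_le_left _ _)
  have h4 : x ≤ p := le_trans hxmem.2 (min_le_right _ _)
  refine ⟨x, w x, h1, h4, by simp only [hw]; linarith, by simp only [hw]; linarith,
    by simp only [hw]; ring, ?_⟩
  simp only [hθ] at hθx
  have : w x = v₀ + aa - (x - u₀) := rfl
  rw [this]; nlinarith [hθx, hinv]


lemma cut_pack (M : ℝ) (hM : 0 < M) (A : Set ℝ) (hA : MeasurableSet A)
    (hAsub : A ⊆ Set.Icc 0 M) :
    ∃ S : ℝ → Set ℝ,
      (∀ u, MeasurableSet (S u)) ∧ (∀ u, S u ⊆ A) ∧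
      (∀ u v, u ≤ v → S u ⊆ S v) ∧
      (∀ u, u ∈ Set.Icc 0 (MeasureTheory.volume A).toReal →
        MeasureTheory.volume (S u) = ENNReal.ofReal u) ∧
      MeasureTheory.volume (A \ S (MeasureTheory.volume A).toReal) = 0 := by
  have hAfin : MeasureTheory.volume A ≠ ∞ := by
    refine ne_of_lt (lt_of_le_of_lt (measure_mono hAsub) ?_)
    rw [Real.volume_Icc]; exact ENNReal.ofReal_lt_top
  set T := (MeasureTheory.volume A).toReal with hT
  set m : ℝ → ℝ := fun x => (MeasureTheory.volume (A ∩ Set.Iic x)).toReal with hm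
  have hfinx : ∀ x, MeasureTheory.volume (A ∩ Set.Iic x) ≠ ∞ :=
    fun x => ne_of_lt (lt_of_le_of_lt (measure_mono Set.inter_subset_left) hAfin.lt_top)
  have hm_mono : Monotone m := by
    intro x y hxy
    exact ENNReal.toReal_le_toReal (hfinx x) (hfinx y) |>.mpr
      (measure_mono (Set.inter_subset_inter_right _ (Set.Iic_subset_Iic.mpr hxy)))
  have hm_split : ∀ x y, x ≤ y →
      MeasureTheory.volume (A ∩ Set.Iic y)
        = MeasureTheory.volume (A ∩ Set.Iic x) + MeasureTheory.volume (A ∩ Set.Ioc x y) := by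
    intro x y hxy
    rw [← measure_union ?_ (hA.inter measurableSet_Ioc)]
    · rw [← Set.inter_union_distrib_left, Set.Iic_union_Ioc_eq_Iic hxy]
    · have hd : Disjoint (Set.Iic x) (Set.Ioc x y) := by
        rw [Set.disjoint_left]
        intro t ht ht'
        exact absurd ht'.1 (not_lt.mpr ht)
      exact hd.mono Set.inter_subset_right Set.inter_subset_right
  have hm_lip : ∀ x y, x ≤ y → m y - m x ≤ y - x := by
    intro x y hxy
    have h1 := hm_split x y hxy
    have h2 : MeasureTheory.volume (A ∩ Set.Ioc x y) ≤ ENNReal.ofReal (y - x) := by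
      refine le_trans (measure_mono Set.inter_subset_right) ?_
      rw [Real.volume_Ioc]
    have : m y = m x + (MeasureTheory.volume (A ∩ Set.Ioc x y)).toReal := by
      rw [hm]; simp only []
      rw [h1, ENNReal.toReal_add (hfinx x) (ne_of_lt (lt_of_le_of_lt h2 ENNReal.ofReal_lt_top))]
    rw [this]
    have := ENNReal.toReal_le_toReal (ne_of_lt (lt_of_le_of_lt h2 ENNReal.ofReal_lt_top))
      ENNReal.ofReal_ne_top |>.mpr h2
    rw [ENNReal.toReal_ofReal (by linarith)] at this
    linarith
  have hm_key : ∀ x y : ℝ, x ≤ y → |m y - m x| ≤ |y - x| := by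
    intro x y hxy
    rw [abs_of_nonneg (sub_nonneg.mpr (hm_mono hxy)), abs_of_nonneg (sub_nonneg.mpr hxy)]
    exact hm_lip x y hxy
  have hm_cont : Continuous m := by
    refine Metric.continuous_iff.mpr (fun x ε hε => ⟨ε, hε, fun y hxy => ?_⟩)
    rw [Real.dist_eq] at hxy ⊢
    rcases le_total x y with hc | hc
    · exact lt_of_le_of_lt (hm_key x y hc) hxy
    · rw [abs_sub_comm y x] at hxy
      rw [abs_sub_comm (m y) (m x)]
      exact lt_of_le_of_lt (hm_key y x hc) hxy
  have hm_zero : ∀ x, x ≤ 0 → m x = 0 := by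
    intro x hx
    have : A ∩ Set.Iic x ⊆ {0} := by
      intro t ⟨htA, htx⟩
      have := (hAsub htA).1
      have : t = 0 := le_antisymm (le_trans htx hx) this
      simp [this]
    rw [hm]; simp only []
    rw [le_antisymm (le_trans (measure_mono this) (by simp)) zero_le]
    simp
  have hm_top : m M = T := by
    have hAe : A ∩ Set.Iic M = A := Set.inter_eq_left.mpr (fun t ht => (hAsub ht).2)
    show (MeasureTheory.volume (A ∩ Set.Iic M)).toReal = T
    rw [hAe, hT]
  have hT0 : 0 ≤ T := ENNReal.toReal_nonneg
  -- the cut function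
  set ξ : ℝ → ℝ := fun u => sInf (Set.Icc 0 M ∩ {x | u ≤ m x}) with hξ
  have hset_closed : ∀ u, IsClosed (Set.Icc 0 M ∩ {x | u ≤ m x}) :=
    fun u => isClosed_Icc.inter (isClosed_le continuous_const hm_cont)
  have hset_ne : ∀ u, u ≤ T → (Set.Icc 0 M ∩ {x | u ≤ m x}).Nonempty :=
    fun u hu => ⟨M, ⟨le_of_lt hM, le_rfl⟩, by rw [Set.mem_setOf_eq, hm_top]; exact hu⟩
  have hset_bdd : ∀ u, BddBelow (Set.Icc 0 M ∩ {x | u ≤ m x}) :=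
    fun u => (bddBelow_Icc (a := M) (b := (0:ℝ))).mono Set.inter_subset_left
  have hξ_mem : ∀ u, u ≤ T → ξ u ∈ Set.Icc 0 M ∩ {x | u ≤ m x} :=
    fun u hu => (hset_closed u).csInf_mem (hset_ne u hu) (hset_bdd u)
  have hξ_eq : ∀ u, 0 ≤ u → u ≤ T → m (ξ u) = u := by
    intro u hu0 huT
    have hmem := hξ_mem u huT
    refine le_antisymm ?_ hmem.2
    rcases lt_or_ge 0 (ξ u) with hpos | hneg
    · -- approach from the left
      have hev : ∀ᶠ x in nhdsWithin (ξ u) (Set.Iio (ξ u)), m x ≤ u := by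
        filter_upwards [Ioo_mem_nhdsLT_of_mem (Set.mem_Ioc.mpr ⟨hpos, le_rfl⟩)] with x hx
        rcases le_or_gt (m x) u with hc | hc
        · exact hc
        · exfalso
          have hxmem : x ∈ Set.Icc 0 M ∩ {x | u ≤ m x} :=
            ⟨⟨le_of_lt hx.1, le_trans (le_of_lt hx.2) hmem.1.2⟩, le_of_lt hc⟩
          exact absurd (csInf_le (hset_bdd u) hxmem) (not_le.mpr hx.2)
      exact le_of_tendsto ((hm_cont.tendsto (ξ u)).mono_left nhdsWithin_le_nhds) hev
    · have h0 : ξ u = 0 := le_antisymm hneg hmem.1.1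
      rw [h0, hm_zero 0 le_rfl]; exact hu0
  have hξ_mono : ∀ u v, u ≤ v → v ≤ T → ξ u ≤ ξ v :=
    fun u v huv hvT => csInf_le_csInf (hset_bdd u) (hset_ne v hvT)
      (Set.inter_subset_inter_right _ (fun x hx => le_trans huv hx))
  refine ⟨fun u => if u ≤ T then A ∩ Set.Iic (ξ u) else A, ?_, ?_, ?_, ?_, ?_⟩
  · intro u
    by_cases hc : u ≤ T <;> simp [hc, hA, hA.inter measurableSet_Iic]
  · intro u
    by_cases hc : u ≤ T <;> simp [hc, Set.inter_subset_left]
  · intro u v huv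
    by_cases hcu : u ≤ T
    · by_cases hcv : v ≤ T
      · simp only [if_pos hcu, if_pos hcv]
        exact Set.inter_subset_inter_right _ (Set.Iic_subset_Iic.mpr (hξ_mono u v huv hcv))
      · simp only [if_pos hcu, if_neg hcv]
        exact Set.inter_subset_left
    · have : ¬ v ≤ T := fun hv => hcu (le_trans huv hv)
      simp [hcu, this]
  · intro u ⟨hu0, huT⟩
    simp only [if_pos huT]
    have := hξ_eq u hu0 huT
    rw [hm] at this; simp only [] at this
    rw [← ENNReal.ofReal_toReal (hfinx (ξ u)), this]
  · simp only [if_pos le_rfl]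
    have hvol : MeasureTheory.volume (A ∩ Set.Iic (ξ T)) = MeasureTheory.volume A := by
      have := hξ_eq T hT0 le_rfl
      rw [hm] at this; simp only [] at this
      rw [← ENNReal.ofReal_toReal (hfinx (ξ T)), this, hT, ENNReal.ofReal_toReal hAfin]
    rw [measure_diff Set.inter_subset_left (hA.inter measurableSet_Iic).nullMeasurableSet
      (hfinx _), hvol, tsub_self]


lemma fam_derived (M : ℝ) (h : ℝ → ℝ) (hmeas : Measurable h) (h0 : ∀ t, 0 ≤ h t)
    (hint : MeasureTheory.IntegrableOn h (Set.Icc 0 M))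
    (A : Set ℝ) (hA : MeasurableSet A) (hAsub : A ⊆ Set.Icc 0 M) (S : ℝ → Set ℝ)
    (hSmeas : ∀ u, MeasurableSet (S u)) (hSsub : ∀ u, S u ⊆ A)
    (hSmono : ∀ u v, u ≤ v → S u ⊆ S v)
    (hSvol : ∀ u, u ∈ Set.Icc 0 (MeasureTheory.volume A).toReal →
      MeasureTheory.volume (S u) = ENNReal.ofReal u)
    (hStop : MeasureTheory.volume (A \ S (MeasureTheory.volume A).toReal) = 0) :
    (∀ u v, u ∈ Set.Icc 0 (MeasureTheory.volume A).toReal →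
        v ∈ Set.Icc 0 (MeasureTheory.volume A).toReal → u ≤ v →
        MeasureTheory.volume (S v \ S u) = ENNReal.ofReal (v - u)) ∧
    (∀ u v, u ∈ Set.Icc 0 (MeasureTheory.volume A).toReal →
        v ∈ Set.Icc 0 (MeasureTheory.volume A).toReal → u ≤ v →
        ∫ t in S v \ S u, h t = (∫ t in S v, h t) - (∫ t in S u, h t)) ∧
    ((∫ t in S 0, h t) = 0) ∧
    ((∫ t in S (MeasureTheory.volume A).toReal, h t) = ∫ t in A, h t) ∧
    ContinuousOn (fun u => ∫ t in S u, h t) (Set.Icc 0 (MeasureTheory.volume A).toReal) := by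
  set T := (MeasureTheory.volume A).toReal with hT
  have hT0 : 0 ≤ T := ENNReal.toReal_nonneg
  have hIntOn : ∀ B : Set ℝ, B ⊆ A → MeasureTheory.IntegrableOn h B :=
    fun B hB => hint.mono_set (hB.trans hAsub)
  have hvol1 : ∀ u v, u ∈ Set.Icc 0 T → v ∈ Set.Icc 0 T → u ≤ v →
      MeasureTheory.volume (S v \ S u) = ENNReal.ofReal (v - u) := by
    intro u v hu hv huv
    rw [measure_diff (hSmono u v huv) (hSmeas u).nullMeasurableSet
      (by rw [hSvol u hu]; exact ENNReal.ofReal_ne_top), hSvol u hu, hSvol v hv,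
      ← ENNReal.ofReal_sub _ hu.1]
  have hint1 : ∀ u v, u ∈ Set.Icc 0 T → v ∈ Set.Icc 0 T → u ≤ v →
      ∫ t in S v \ S u, h t = (∫ t in S v, h t) - (∫ t in S u, h t) := by
    intro u v hu hv huv
    have hsplit : S v = S u ∪ (S v \ S u) := (Set.union_diff_cancel (hSmono u v huv)).symm
    have := MeasureTheory.setIntegral_union (f := h) (μ := MeasureTheory.volume)
      Set.disjoint_sdiff_right ((hSmeas v).diff (hSmeas u))
      (hIntOn _ (hSsub u)) (hIntOn _ (Set.diff_subset.trans (hSsub v)))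
    rw [← hsplit] at this
    rw [this]; ring
  have hzero : (∫ t in S 0, h t) = 0 :=
    MeasureTheory.setIntegral_measure_zero _ (by rw [hSvol 0 ⟨le_rfl, hT0⟩]; simp)
  have htop : (∫ t in S T, h t) = ∫ t in A, h t := by
    have hsplit : A = S T ∪ (A \ S T) := (Set.union_diff_cancel (hSsub T)).symm
    have := MeasureTheory.setIntegral_union (f := h) (μ := MeasureTheory.volume)
      Set.disjoint_sdiff_right (hA.diff (hSmeas T))
      (hIntOn _ (hSsub T)) (hIntOn _ Set.diff_subset)
    rw [← hsplit, MeasureTheory.setIntegral_measure_zero _ hStop, add_zero] at this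
    exact this.symm
  refine ⟨hvol1, hint1, hzero, htop, ?_⟩
  rw [Metric.continuousOn_iff]
  intro u₀ hu₀ ε hε
  obtain ⟨δ, hδ, hδ'⟩ := habs_aux M h hmeas h0 hint ε hε
  refine ⟨δ, hδ, fun u hu hdist => ?_⟩
  rw [Real.dist_eq] at hdist
  have key : ∀ x y, x ∈ Set.Icc 0 T → y ∈ Set.Icc 0 T → x ≤ y → |y - x| < δ →
      |(∫ t in S y, h t) - ∫ t in S x, h t| < ε := by
    intro x y hx hy hxy hd
    rw [← hint1 x y hx hy hxy]
    rw [abs_of_nonneg (MeasureTheory.setIntegral_nonneg ((hSmeas y).diff (hSmeas x))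
      (fun t _ => h0 t))]
    refine hδ' _ ((hSmeas y).diff (hSmeas x)) ((Set.diff_subset.trans (hSsub y)).trans hAsub) ?_
    rw [hvol1 x y hx hy hxy]
    rw [abs_of_nonneg (by linarith)] at hd
    exact ENNReal.ofReal_lt_ofReal_iff hδ |>.mpr hd
  rw [Real.dist_eq]
  rcases le_total u₀ u with hc | hc
  · exact key u₀ u hu₀ hu hc hdist
  · rw [abs_sub_comm]
    exact key u u₀ hu hu₀ hc (by rw [abs_sub_comm]; exact hdist)

/-- Partition claim used in Theorem 4.1: if `h ≥ 0` on `[0,M]` has average `λ` and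
`Σ a_j = M` with `a_j > 0`, then `[0,M]` admits pairwise disjoint measurable sets `A_j`
with `|A_j| = a_j`, `Σ |A_j| = M` and average of `h` over each `A_j` equal to `λ`. -/
theorem stmt17 (M : ℝ) (hM : 0 < M) (h : ℝ → ℝ) (hmeas : Measurable h)
    (h0 : ∀ t, 0 ≤ h t) (hint : MeasureTheory.IntegrableOn h (Set.Icc 0 M))
    (l : ℝ) (hl : 0 < l) (havg : (1 / M) * ∫ t in Set.Icc (0 : ℝ) M, h t = l)
    (a : ℕ → ℝ) (ha : ∀ j, 0 < a j) (hsum : ∑' j, a j = M) :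
    ∃ A : ℕ → Set ℝ, (∀ j, A j ⊆ Set.Icc 0 M) ∧ (∀ j, MeasurableSet (A j)) ∧
      Pairwise (Function.onFun Disjoint A) ∧
      (∀ j, MeasureTheory.volume (A j) = ENNReal.ofReal (a j)) ∧
      (∑' j, MeasureTheory.volume (A j) = ENNReal.ofReal M) ∧
      (∀ j, (1 / a j) * ∫ t in A j, h t = l) := by
  -- summability and partial sums
  have hsummable : Summable a := by
    by_contra hns
    rw [tsum_eq_zero_of_not_summable hns] at hsum
    linarith
  set s : ℕ → ℝ := fun j => ∑ i ∈ Finset.range j, a i with hs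
  have hs_succ : ∀ j, s (j + 1) = s j + a j := fun j => Finset.sum_range_succ a j
  have hs_le : ∀ j, s j ≤ M := by
    intro j
    rw [← hsum]
    exact Summable.sum_le_tsum (Finset.range j) (fun i _ => (ha i).le) hsummable
  have hs0 : s 0 = 0 := by simp [hs]
  -- P and N
  set P := Set.Icc 0 M ∩ {t | l ≤ h t} with hP
  set N := Set.Icc 0 M ∩ {t | h t < l} with hN
  have hPmeas : MeasurableSet P :=
    measurableSet_Icc.inter (measurableSet_le measurable_const hmeas)
  have hNmeas : MeasurableSet N :=
    measurableSet_Icc.inter (measurableSet_lt hmeas measurable_const)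
  have hPsub : P ⊆ Set.Icc 0 M := Set.inter_subset_left
  have hNsub : N ⊆ Set.Icc 0 M := Set.inter_subset_left
  have hPN : Disjoint P N := by
    rw [Set.disjoint_left]
    rintro t ⟨_, ht⟩ ⟨_, ht'⟩
    exact absurd (show h t < l from ht') (not_lt.mpr (show l ≤ h t from ht))
  have hPNunion : P ∪ N = Set.Icc 0 M := by
    ext t
    constructor
    · rintro (⟨h1, _⟩ | ⟨h1, _⟩) <;> exact h1
    · intro htm
      rcases le_or_gt l (h t) with hc | hc
      exacts [Or.inl ⟨htm, hc⟩, Or.inr ⟨htm, hc⟩]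
  have hvolPN : MeasureTheory.volume P + MeasureTheory.volume N = ENNReal.ofReal M := by
    rw [← measure_union hPN hNmeas, hPNunion, Real.volume_Icc, sub_zero]
  have hPfin : MeasureTheory.volume P ≠ ∞ := by
    refine ne_of_lt (lt_of_le_of_lt (measure_mono hPsub) ?_)
    rw [Real.volume_Icc]; exact ENNReal.ofReal_lt_top
  have hNfin : MeasureTheory.volume N ≠ ∞ := by
    refine ne_of_lt (lt_of_le_of_lt (measure_mono hNsub) ?_)
    rw [Real.volume_Icc]; exact ENNReal.ofReal_lt_top
  -- total integral
  have hIcc_int : ∫ t in Set.Icc (0:ℝ) M, h t = l * M := by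
    field_simp [hM.ne'] at havg
    linarith
  have hint_PN : (∫ t in P, h t) + (∫ t in N, h t) = l * M := by
    rw [← MeasureTheory.setIntegral_union hPN hNmeas (hint.mono_set hPsub)
      (hint.mono_set hNsub), hPNunion, hIcc_int]
  -- nested families
  obtain ⟨SP, hSPmeas, hSPsub, hSPmono, hSPvol, hSPtop⟩ := cut_pack M hM P hPmeas hPsub
  obtain ⟨SN, hSNmeas, hSNsub, hSNmono, hSNvol, hSNtop⟩ := cut_pack M hM N hNmeas hNsub
  obtain ⟨hPvol1, hPint1, hPzero, hPtop, hPcont⟩ :=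
    fam_derived M h hmeas h0 hint P hPmeas hPsub SP hSPmeas hSPsub hSPmono hSPvol hSPtop
  obtain ⟨hNvol1, hNint1, hNzero, hNtop, hNcont⟩ :=
    fam_derived M h hmeas h0 hint N hNmeas hNsub SN hSNmeas hSNsub hSNmono hSNvol hSNtop
  set p := (MeasureTheory.volume P).toReal with hpdef
  set n := (MeasureTheory.volume N).toReal with hndef
  have hp0 : 0 ≤ p := ENNReal.toReal_nonneg
  have hn0 : 0 ≤ n := ENNReal.toReal_nonneg
  have hpn : p + n = M := by
    rw [hpdef, hndef, ← ENNReal.toReal_add hPfin hNfin, hvolPN,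
      ENNReal.toReal_ofReal hM.le]
  set Φ : ℝ → ℝ := fun u => ∫ t in SP u, h t with hΦ
  set Ψ : ℝ → ℝ := fun v => ∫ t in SN v, h t with hΨ
  -- increment bounds
  have hΦlow : ∀ x y, 0 ≤ x → x ≤ y → y ≤ p → l * (y - x) ≤ Φ y - Φ x := by
    intro x y hx hxy hyp
    have hxm : x ∈ Set.Icc 0 p := ⟨hx, by linarith⟩
    have hym : y ∈ Set.Icc 0 p := ⟨by linarith, hyp⟩
    rw [← hPint1 x y hxm hym hxy]
    have hmeasD := (hSPmeas y).diff (hSPmeas x)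
    have hvolD := hPvol1 x y hxm hym hxy
    have hDsub : SP y \ SP x ⊆ P := Set.diff_subset.trans (hSPsub y)
    have key := MeasureTheory.setIntegral_ge_of_const_le (μ := MeasureTheory.volume)
      (c := l) hmeasD (by rw [hvolD]; exact ENNReal.ofReal_ne_top)
      (fun t ht => (hDsub ht).2)
      (hint.mono_set (hDsub.trans hPsub))
    rw [measureReal_def, hvolD, ENNReal.toReal_ofReal (by linarith), smul_eq_mul, mul_comm] at key
    exact key
  have hΨup : ∀ x y, 0 ≤ x → x ≤ y → y ≤ n → Ψ y - Ψ x ≤ l * (y - x) := by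
    intro x y hx hxy hyn
    have hxm : x ∈ Set.Icc 0 n := ⟨hx, by linarith⟩
    have hym : y ∈ Set.Icc 0 n := ⟨by linarith, hyn⟩
    rw [← hNint1 x y hxm hym hxy]
    have hmeasD := (hSNmeas y).diff (hSNmeas x)
    have hvolD := hNvol1 x y hxm hym hxy
    have hDsub : SN y \ SN x ⊆ N := Set.diff_subset.trans (hSNsub y)
    have hDfin : MeasureTheory.volume (SN y \ SN x) ≠ ∞ := by
      rw [hvolD]; exact ENNReal.ofReal_ne_top
    have key := MeasureTheory.setIntegral_mono_on
      (hint.mono_set (hDsub.trans hNsub))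
      (MeasureTheory.integrableOn_const hDfin) hmeasD
      (fun t ht => le_of_lt (hDsub ht).2)
    rw [MeasureTheory.setIntegral_const, measureReal_def, hvolD, ENNReal.toReal_ofReal (by linarith),
      smul_eq_mul, mul_comm] at key
    exact key
  have hglob : Φ p + Ψ n = l * (p + n) := by
    rw [hΦ, hΨ]
    simp only []
    rw [hpdef, hndef, hPtop, hNtop, hpn, hint_PN]
  -- the recursive construction
  have hstep' : ∀ (j : ℕ) (x : ℝ × ℝ),
      ∃ y : ℝ × ℝ,
        (x.1 ∈ Set.Icc 0 p ∧ x.2 ∈ Set.Icc 0 n ∧ x.1 + x.2 = s j ∧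
          Φ x.1 + Ψ x.2 = l * (x.1 + x.2)) →
        ((y.1 ∈ Set.Icc 0 p ∧ y.2 ∈ Set.Icc 0 n ∧ y.1 + y.2 = s (j + 1) ∧
          Φ y.1 + Ψ y.2 = l * (y.1 + y.2)) ∧ x.1 ≤ y.1 ∧ x.2 ≤ y.2) := by
    intro j x
    by_cases hx : x.1 ∈ Set.Icc 0 p ∧ x.2 ∈ Set.Icc 0 n ∧ x.1 + x.2 = s j ∧
        Φ x.1 + Ψ x.2 = l * (x.1 + x.2)
    · obtain ⟨hxu, hxv, hxs, hxinv⟩ := hx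
      have hsum' : x.1 + x.2 + a j ≤ p + n := by
        rw [hxs, hpn, ← hs_succ j]
        exact hs_le (j + 1)
      obtain ⟨u', v', h1, h2, h3, h4, h5, h6⟩ :=
        step_ex l p n (a j) x.1 x.2 Φ Ψ (ha j) hxu hxv hsum' hglob hxinv hPcont hNcont
          hΦlow hΨup
      refine ⟨(u', v'), fun _ => ⟨⟨⟨le_trans hxu.1 h1, h2⟩, ⟨le_trans hxv.1 h3, h4⟩, ?_, h6⟩,
        h1, h3⟩⟩
      rw [hs_succ j, ← hxs]
      exact h5
    · exact ⟨x, fun hx' => absurd hx' hx⟩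
  choose F hF using hstep'
  set g : ℕ → ℝ × ℝ := fun j => Nat.rec ((0:ℝ), (0:ℝ)) F j with hg
  have hgsucc : ∀ j, g (j + 1) = F j (g j) := fun _ => rfl
  have hInv : ∀ j, (g j).1 ∈ Set.Icc 0 p ∧ (g j).2 ∈ Set.Icc 0 n ∧
      (g j).1 + (g j).2 = s j ∧ Φ (g j).1 + Ψ (g j).2 = l * ((g j).1 + (g j).2) := by
    intro j
    induction j with
    | zero =>
      refine ⟨⟨le_rfl, hp0⟩, ⟨le_rfl, hn0⟩, ?_, ?_⟩
      · show (0:ℝ) + 0 = s 0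
        rw [hs0]; ring
      · show Φ 0 + Ψ 0 = l * ((0:ℝ) + 0)
        have hΦ0 : Φ 0 = 0 := hPzero
        have hΨ0 : Ψ 0 = 0 := hNzero
        rw [hΦ0, hΨ0]; ring
    | succ j ih =>
      rw [hgsucc j]
      exact (hF j (g j) ih).1
  have hlink : ∀ j, (g j).1 ≤ (g (j + 1)).1 ∧ (g j).2 ≤ (g (j + 1)).2 := by
    intro j
    rw [hgsucc j]
    exact (hF j (g j) (hInv j)).2
  set u : ℕ → ℝ := fun j => (g j).1 with hu
  set v : ℕ → ℝ := fun j => (g j).2 with hv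
  have humono : Monotone u := monotone_nat_of_le_succ (fun j => (hlink j).1)
  have hvmono : Monotone v := monotone_nat_of_le_succ (fun j => (hlink j).2)
  have humem : ∀ j, u j ∈ Set.Icc 0 p := fun j => (hInv j).1
  have hvmem : ∀ j, v j ∈ Set.Icc 0 n := fun j => (hInv j).2.1
  have huv : ∀ j, u j + v j = s j := fun j => (hInv j).2.2.1
  have hinv : ∀ j, Φ (u j) + Ψ (v j) = l * s j := by
    intro j
    rw [← huv j]
    exact (hInv j).2.2.2
  have hdu : ∀ j, u (j + 1) - u j + (v (j + 1) - v j) = a j := by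
    intro j
    have h1 := huv j
    have h2 := huv (j + 1)
    have h3 := hs_succ j
    linarith
  -- the answer
  refine ⟨fun j => (SP (u (j + 1)) \ SP (u j)) ∪ (SN (v (j + 1)) \ SN (v j)), ?_, ?_, ?_, ?_, ?_, ?_⟩
  · intro j
    apply Set.union_subset
    · exact (Set.diff_subset.trans (hSPsub _)).trans hPsub
    · exact (Set.diff_subset.trans (hSNsub _)).trans hNsub
  · intro j
    exact ((hSPmeas _).diff (hSPmeas _)).union ((hSNmeas _).diff (hSNmeas _))
  · -- pairwise disjoint
    have key : ∀ i j, i < j →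
        Disjoint ((SP (u (i + 1)) \ SP (u i)) ∪ (SN (v (i + 1)) \ SN (v i)))
          ((SP (u (j + 1)) \ SP (u j)) ∪ (SN (v (j + 1)) \ SN (v j))) := by
      intro i j hij
      have hPij : Disjoint (SP (u (i + 1)) \ SP (u i)) (SP (u (j + 1)) \ SP (u j)) := by
        have hsub : SP (u (i + 1)) \ SP (u i) ⊆ SP (u j) :=
          Set.diff_subset.trans (hSPmono _ _ (humono hij))
        exact (Set.disjoint_sdiff_right (s := SP (u j)) (t := SP (u (j + 1)))).mono_left hsub
      have hNij : Disjoint (SN (v (i + 1)) \ SN (v i)) (SN (v (j + 1)) \ SN (v j)) := by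
        have hsub : SN (v (i + 1)) \ SN (v i) ⊆ SN (v j) :=
          Set.diff_subset.trans (hSNmono _ _ (hvmono hij))
        exact (Set.disjoint_sdiff_right (s := SN (v j)) (t := SN (v (j + 1)))).mono_left hsub
      have hPNij : Disjoint (SP (u (i + 1)) \ SP (u i)) (SN (v (j + 1)) \ SN (v j)) :=
        hPN.mono (Set.diff_subset.trans (hSPsub _)) (Set.diff_subset.trans (hSNsub _))
      have hNPij : Disjoint (SN (v (i + 1)) \ SN (v i)) (SP (u (j + 1)) \ SP (u j)) :=
        hPN.symm.mono (Set.diff_subset.trans (hSNsub _)) (Set.diff_subset.trans (hSPsub _))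
      rw [Set.disjoint_union_left]
      constructor <;> rw [Set.disjoint_union_right]
      · exact ⟨hPij, hPNij⟩
      · exact ⟨hNPij, hNij⟩
    intro i j hij
    rcases lt_or_gt_of_ne hij with hc | hc
    · exact key i j hc
    · exact (key j i hc).symm
  · -- volumes
    intro j
    have hd : Disjoint (SP (u (j + 1)) \ SP (u j)) (SN (v (j + 1)) \ SN (v j)) :=
      hPN.mono (Set.diff_subset.trans (hSPsub _)) (Set.diff_subset.trans (hSNsub _))
    rw [measure_union hd ((hSNmeas _).diff (hSNmeas _)),
      hPvol1 _ _ (humem j) (humem (j + 1)) (humono (Nat.le_succ j)),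
      hNvol1 _ _ (hvmem j) (hvmem (j + 1)) (hvmono (Nat.le_succ j)),
      ← ENNReal.ofReal_add (by linarith [(humono (Nat.le_succ j) : u j ≤ u (j+1))])
        (by linarith [(hvmono (Nat.le_succ j) : v j ≤ v (j+1))]), hdu j]
  · -- total volume
    have hv1 : ∀ j : ℕ, MeasureTheory.volume
        ((SP (u (j + 1)) \ SP (u j)) ∪ (SN (v (j + 1)) \ SN (v j))) = ENNReal.ofReal (a j) := by
      intro j
      have hd : Disjoint (SP (u (j + 1)) \ SP (u j)) (SN (v (j + 1)) \ SN (v j)) :=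
        hPN.mono (Set.diff_subset.trans (hSPsub _)) (Set.diff_subset.trans (hSNsub _))
      rw [measure_union hd ((hSNmeas _).diff (hSNmeas _)),
        hPvol1 _ _ (humem j) (humem (j + 1)) (humono (Nat.le_succ j)),
        hNvol1 _ _ (hvmem j) (hvmem (j + 1)) (hvmono (Nat.le_succ j)),
        ← ENNReal.ofReal_add (by linarith [(humono (Nat.le_succ j) : u j ≤ u (j+1))])
          (by linarith [(hvmono (Nat.le_succ j) : v j ≤ v (j+1))]), hdu j]
    have e1 : ∑' (j : ℕ), MeasureTheory.volume
        ((SP (u (j + 1)) \ SP (u j)) ∪ (SN (v (j + 1)) \ SN (v j)))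
        = ∑' (j : ℕ), ENNReal.ofReal (a j) := tsum_congr hv1
    have e2 : ENNReal.ofReal (∑' (j : ℕ), a j) = ∑' (j : ℕ), ENNReal.ofReal (a j) :=
      ENNReal.ofReal_tsum_of_nonneg (fun j => (ha j).le) hsummable
    rw [hsum] at e2
    exact e1.trans e2.symm
  · -- averages
    intro j
    have hd : Disjoint (SP (u (j + 1)) \ SP (u j)) (SN (v (j + 1)) \ SN (v j)) :=
      hPN.mono (Set.diff_subset.trans (hSPsub _)) (Set.diff_subset.trans (hSNsub _))
    have hintP : MeasureTheory.IntegrableOn h (SP (u (j + 1)) \ SP (u j)) :=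
      hint.mono_set ((Set.diff_subset.trans (hSPsub _)).trans hPsub)
    have hintN : MeasureTheory.IntegrableOn h (SN (v (j + 1)) \ SN (v j)) :=
      hint.mono_set ((Set.diff_subset.trans (hSNsub _)).trans hNsub)
    rw [MeasureTheory.setIntegral_union hd ((hSNmeas _).diff (hSNmeas _)) hintP hintN,
      hPint1 _ _ (humem j) (humem (j + 1)) (humono (Nat.le_succ j)),
      hNint1 _ _ (hvmem j) (hvmem (j + 1)) (hvmono (Nat.le_succ j))]
    have h1 := hinv j
    have h2 := hinv (j + 1)
    have h3 := hs_succ j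
    have ha' : a j ≠ 0 := (ha j).ne'
    have h4 : l * s (j + 1) = l * s j + l * a j := by rw [h3]; ring
    have : Φ (u (j + 1)) - Φ (u j) + (Ψ (v (j + 1)) - Ψ (v j)) = l * a j := by linarith
    rw [show (∫ t in SP (u (j+1)), h t) - (∫ t in SP (u j), h t) +
        ((∫ t in SN (v (j+1)), h t) - ∫ t in SN (v j), h t)
        = Φ (u (j + 1)) - Φ (u j) + (Ψ (v (j + 1)) - Ψ (v j)) from rfl, this]
    field_simp
end
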